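/- arXiv:1501.00178 — 9 statements merged into one kernel-verified Lean document; each statement's English description precedes it below -/
import Mathlib

section
/- Let $a = (\mu_{ij})$ be an $n \times n$ lower-triangular real matrix with $\mu_{ii} = 1$ for all $i$ and $|\mu_{ij}| \le 1/2$ for all $j < i$. If $a^{-1} = (\nu_{ij})$, then $|\nu_{ij}| \le 0$ if $i < j$, $|\nu_{ii}| \le 1$, and $|\nu_{ij}| \le \frac{1}{3}(\frac{3}{2})^{i-j}$ if $i > j$. -/
/-- Lemma on inverses of unit lower-triangular matrices with small entries. -/
theorem stmt_0 (n : ℕ) (a ν : Matrix (Fin n) (Fin n) ℝ)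
    (hlower : ∀ i j : Fin n, i < j → a i j = 0)
    (hdiag : ∀ i : Fin n, a i i = 1)
    (hoff : ∀ i j : Fin n, j < i → |a i j| ≤ 1 / 2)
    (hinv : a * ν = 1) (hinv' : ν * a = 1) :
    (∀ i j : Fin n, i < j → |ν i j| ≤ 0) ∧
    (∀ i : Fin n, |ν i i| ≤ 1) ∧
    (∀ i j : Fin n, j < i → |ν i j| ≤ (1 / 3) * (3 / 2) ^ ((i : ℕ) - (j : ℕ))) := by
  haveI : Invertible a := ⟨ν, hinv', hinv⟩
  have hAtri : a.BlockTriangular (OrderDual.toDual : Fin n → (Fin n)ᵒᵈ) := by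
    intro i j h
    exact hlower i j h
  have hνinv : a⁻¹ = ν := Matrix.inv_eq_right_inv hinv
  have htri : ∀ i j : Fin n, i < j → ν i j = 0 := by
    intro i j h
    rw [← hνinv]
    exact Matrix.blockTriangular_inv_of_blockTriangular hAtri h
  -- diagonal entries
  have hνd : ∀ i : Fin n, ν i i = 1 := by
    intro i
    have h1 : (ν * a) i i = 1 := by rw [hinv']; simp
    rw [Matrix.mul_apply] at h1
    rw [Finset.sum_eq_single i] at h1
    · rw [hdiag] at h1; simpa using h1
    · intro k _ hk
      rcases lt_or_gt_of_ne hk with hk | hk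
      · rw [hlower k i hk, mul_zero]
      · rw [htri i k hk, zero_mul]
    · simp
  -- recurrence
  have hrec : ∀ i j : Fin n, j < i →
      |ν i j| ≤ (1/2) * ∑ k ∈ Finset.Ioc j i, |ν i k| := by
    intro i j hji
    have h1 : (ν * a) i j = 0 := by
      rw [hinv']
      exact Matrix.one_apply_ne hji.ne'
    rw [Matrix.mul_apply] at h1
    have hsub : Finset.Icc j i ⊆ Finset.univ := Finset.subset_univ _
    have h2 : ∑ k ∈ Finset.Icc j i, ν i k * a k j = 0 := by
      rw [← h1]
      apply Finset.sum_subset hsub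
      intro k _ hk
      simp only [Finset.mem_Icc, not_and_or, not_le] at hk
      rcases hk with hk | hk
      · rw [hlower k j hk, mul_zero]
      · rw [htri i k hk, zero_mul]
    rw [show Finset.Icc j i = Finset.cons j (Finset.Ioc j i) (by simp) from
      (Finset.Icc_eq_cons_Ioc hji.le), Finset.sum_cons, hdiag, mul_one] at h2
    have h3 : ν i j = -∑ k ∈ Finset.Ioc j i, ν i k * a k j := by linarith
    calc |ν i j| = |∑ k ∈ Finset.Ioc j i, ν i k * a k j| := by rw [h3, abs_neg]
      _ ≤ ∑ k ∈ Finset.Ioc j i, |ν i k * a k j| := Finset.abs_sum_le_sum_abs _ _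
      _ ≤ ∑ k ∈ Finset.Ioc j i, |ν i k| * (1/2) := by
          apply Finset.sum_le_sum
          intro k hk
          rw [abs_mul]
          exact mul_le_mul_of_nonneg_left
            (hoff k j (Finset.mem_Ioc.mp hk).1) (abs_nonneg _)
      _ = (1/2) * ∑ k ∈ Finset.Ioc j i, |ν i k| := by
          rw [Finset.mul_sum]; exact Finset.sum_congr rfl fun k _ => mul_comm _ _
  -- key sum bound
  have key : ∀ d : ℕ, ∀ i j : Fin n, j ≤ i → (i : ℕ) - (j : ℕ) = d →
      ∑ k ∈ Finset.Icc j i, |ν i k| ≤ (3/2 : ℝ) ^ d := by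
    intro d
    induction d with
    | zero =>
      intro i j hji hd
      have : j = i := Fin.le_antisymm hji (by omega)
      subst this
      simp [hνd]
    | succ d ih =>
      intro i j hji hd
      have hji' : j < i := by
        rcases lt_or_eq_of_le hji with h | h
        · exact h
        · exfalso; subst h; omega
      have hjn : (j : ℕ) + 1 < n := by omega
      set j' : Fin n := ⟨(j : ℕ) + 1, hjn⟩ with hj'
      have hIoc : Finset.Ioc j i = Finset.Icc j' i := by
        ext k
        simp only [Finset.mem_Ioc, Finset.mem_Icc, Fin.lt_def, Fin.le_def, hj']
        omega
      have hT : ∑ k ∈ Finset.Ioc j i, |ν i k| ≤ (3/2 : ℝ) ^ d := by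
        rw [hIoc]
        exact ih i j' (by rw [Fin.le_def]; simp [hj']; omega) (by simp [hj']; omega)
      rw [show Finset.Icc j i = Finset.cons j (Finset.Ioc j i) (by simp) from
        (Finset.Icc_eq_cons_Ioc hji), Finset.sum_cons]
      have h1 := hrec i j hji'
      have hpos : (0:ℝ) ≤ (3/2:ℝ)^d := by positivity
      calc |ν i j| + ∑ k ∈ Finset.Ioc j i, |ν i k|
          ≤ (1/2) * ∑ k ∈ Finset.Ioc j i, |ν i k| + ∑ k ∈ Finset.Ioc j i, |ν i k| := by linarith
        _ = (3/2) * ∑ k ∈ Finset.Ioc j i, |ν i k| := by ring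
        _ ≤ (3/2) * (3/2)^d := by nlinarith
        _ = (3/2)^(d+1) := by ring
  refine ⟨fun i j h => by rw [htri i j h]; simp, fun i => by rw [hνd]; simp, ?_⟩
  intro i j hji
  have hd : (i : ℕ) - (j : ℕ) = ((i : ℕ) - (j : ℕ) - 1) + 1 := by omega
  have hjn : (j : ℕ) + 1 < n := by omega
  set j' : Fin n := ⟨(j : ℕ) + 1, hjn⟩ with hj'
  have hIoc : Finset.Ioc j i = Finset.Icc j' i := by
    ext k
    simp only [Finset.mem_Ioc, Finset.mem_Icc, Fin.lt_def, Fin.le_def, hj']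
    omega
  have hT : ∑ k ∈ Finset.Ioc j i, |ν i k| ≤ (3/2 : ℝ) ^ ((i:ℕ) - (j:ℕ) - 1) := by
    rw [hIoc]
    exact key _ i j' (by rw [Fin.le_def]; simp [hj']; omega) (by simp [hj']; omega)
  have h1 := hrec i j hji
  calc |ν i j| ≤ (1/2) * ∑ k ∈ Finset.Ioc j i, |ν i k| := h1
    _ ≤ (1/2) * (3/2)^((i:ℕ) - (j:ℕ) - 1) := by linarith
    _ = (1/3) * (3/2)^((i:ℕ) - (j:ℕ)) := by
        conv_rhs => rw [hd]
        rw [pow_succ]; ring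
end

section
/- If $\{b_1,\ldots,b_n\}$ is an LLL-reduced basis for an integral unimodular lattice $L$ with Gram-Schmidt orthogonalization $\{b_1^*,\ldots,b_n^*\}$, then $2^{1-i} \le |b_i^*|^2 \le 2^{n-i}$ for all $i$. -/
/-- The Gram–Schmidt orthogonalization of a family of vectors in `ℝⁿ`. -/
noncomputable def gso {n : ℕ} (b : Fin n → EuclideanSpace ℝ (Fin n)) :
    Fin n → EuclideanSpace ℝ (Fin n) :=
  @InnerProductSpace.gramSchmidt ℝ _ _ _ _ (Fin n) inferInstance inferInstance
    (inferInstance : WellFoundedLT (Fin n)) b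

open Matrix

section Aux
variable {n : ℕ}
local notation "⟪" x ", " y "⟫" => @inner ℝ _ _ x y

lemma gso_orthogonal (b : Fin n → EuclideanSpace ℝ (Fin n)) {i j : Fin n} (h : i ≠ j) :
    ⟪gso b i, gso b j⟫ = 0 :=
  @InnerProductSpace.gramSchmidt_orthogonal ℝ _ _ _ _ (Fin n) _ _ (inferInstance : WellFoundedLT (Fin n)) b i j h

lemma gso_ne_zero {b : Fin n → EuclideanSpace ℝ (Fin n)} (hli : LinearIndependent ℝ b)
    (i : Fin n) : gso b i ≠ 0 :=
  @InnerProductSpace.gramSchmidt_ne_zero ℝ _ _ _ _ (Fin n) _ _ (inferInstance : WellFoundedLT (Fin n)) b i hli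

lemma gso_def'' (b : Fin n → EuclideanSpace ℝ (Fin n)) (i : Fin n) :
    b i = gso b i + ∑ k ∈ Finset.Iio i, (⟪gso b k, b i⟫ / ‖gso b k‖ ^ 2) • gso b k := by
  have := @InnerProductSpace.gramSchmidt_def'' ℝ _ _ _ _ (Fin n) _ _ (inferInstance : WellFoundedLT (Fin n)) b i
  simpa [gso] using this

noncomputable def mu (b : Fin n → EuclideanSpace ℝ (Fin n)) : Matrix (Fin n) (Fin n) ℝ :=
  Matrix.of fun i k => if k ≤ i then ⟪gso b k, b i⟫ / ‖gso b k‖ ^ 2 else 0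

lemma gso_inner_self (b : Fin n → EuclideanSpace ℝ (Fin n)) (i : Fin n) :
    ⟪gso b i, b i⟫ = ‖gso b i‖ ^ 2 := by
  conv_lhs => rw [gso_def'' b i]
  rw [inner_add_right, inner_sum, real_inner_self_eq_norm_sq]
  rw [Finset.sum_eq_zero, add_zero]
  intro k hk
  rw [real_inner_smul_right, gso_orthogonal b (Finset.mem_Iio.mp hk).ne', mul_zero]

lemma rep (b : Fin n → EuclideanSpace ℝ (Fin n)) (hli : LinearIndependent ℝ b) (i : Fin n) :
    b i = ∑ k, mu b i k • gso b k := by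
  have hN : ‖gso b i‖ ^ 2 ≠ 0 :=
    pow_ne_zero _ (norm_ne_zero_iff.mpr (gso_ne_zero hli i))
  have h1 : ∑ k, mu b i k • gso b k
      = ∑ k ∈ Finset.Iic i, mu b i k • gso b k := by
    refine (Finset.sum_subset (Finset.subset_univ _) ?_).symm
    intro k _ hk
    rw [Finset.mem_Iic, not_le] at hk
    simp [mu, not_le.mpr hk]
  have h2 : Finset.Iic i = insert i (Finset.Iio i) := by
    rw [Finset.Iio_insert]
  rw [h1, h2, Finset.sum_insert (by simp)]
  have hdiag : mu b i i = 1 := by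
    simp only [mu, Matrix.of_apply, le_refl, if_true]
    rw [gso_inner_self, div_self hN]
  rw [hdiag, one_smul]
  conv_lhs => rw [gso_def'' b i]
  congr 1
  refine Finset.sum_congr rfl fun k hk => ?_
  have hki : k ≤ i := (Finset.mem_Iio.mp hk).le
  simp [mu, hki]

lemma gram_eq (b : Fin n → EuclideanSpace ℝ (Fin n)) (hli : LinearIndependent ℝ b) (i j : Fin n) :
    ⟪b i, b j⟫ = ∑ k, mu b i k * mu b j k * ‖gso b k‖ ^ 2 := by
  conv_lhs => rw [rep b hli i, rep b hli j]
  rw [sum_inner]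
  refine Finset.sum_congr rfl fun k _ => ?_
  rw [inner_sum]
  rw [Finset.sum_eq_single k]
  · rw [real_inner_smul_left, real_inner_smul_right, real_inner_self_eq_norm_sq]; ring
  · intro l _ hlk
    rw [real_inner_smul_left, real_inner_smul_right, gso_orthogonal b (Ne.symm hlk)]
    ring
  · intro h; exact absurd (Finset.mem_univ k) h

lemma filter_lt_eq_map (k : ℕ) (hk : k ≤ n) :
    (Finset.univ.filter (fun j : Fin n => (j : ℕ) < k)) =
      (Finset.univ : Finset (Fin k)).map (Fin.castLEEmb hk) := by
  ext t
  simp only [Finset.mem_filter, Finset.mem_univ, true_and, Finset.mem_map]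
  constructor
  · intro ht
    exact ⟨⟨t, ht⟩, by ext; rfl⟩
  · rintro ⟨s, rfl⟩
    exact s.isLt

lemma mu_diag (b : Fin n → EuclideanSpace ℝ (Fin n)) (hli : LinearIndependent ℝ b) (i : Fin n) :
    mu b i i = 1 := by
  have hN : ‖gso b i‖ ^ 2 ≠ 0 :=
    pow_ne_zero _ (norm_ne_zero_iff.mpr (gso_ne_zero hli i))
  simp only [mu, Matrix.of_apply, le_refl, if_true]
  rw [gso_inner_self, div_self hN]

lemma mu_zero (b : Fin n → EuclideanSpace ℝ (Fin n)) {i j : Fin n} (h : ¬ j ≤ i) :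
    mu b i j = 0 := by
  simp [mu, h]

lemma det_gram (b : Fin n → EuclideanSpace ℝ (Fin n)) (hli : LinearIndependent ℝ b)
    (k : ℕ) (hk : k ≤ n) :
    (Matrix.of fun i j : Fin k => ⟪b (Fin.castLE hk i), b (Fin.castLE hk j)⟫).det
      = ∏ j : Fin k, ‖gso b (Fin.castLE hk j)‖ ^ 2 := by
  set e := Fin.castLE hk with he
  set A : Matrix (Fin k) (Fin k) ℝ := Matrix.of fun i j => mu b (e i) (e j) with hA
  set D : Matrix (Fin k) (Fin k) ℝ :=
    Matrix.diagonal (fun j => ‖gso b (e j)‖ ^ 2) with hD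
  have key : (Matrix.of fun i j : Fin k => ⟪b (e i), b (e j)⟫) = A * D * Aᵀ := by
    ext i j
    have h1 : (A * D * Aᵀ) i j
        = ∑ t, mu b (e i) (e t) * mu b (e j) (e t) * ‖gso b (e t)‖ ^ 2 := by
      rw [Matrix.mul_apply]
      refine Finset.sum_congr rfl fun t _ => ?_
      rw [Matrix.mul_diagonal, Matrix.transpose_apply]
      simp only [hA, Matrix.of_apply]
      ring
    rw [Matrix.of_apply, h1, gram_eq b hli]
    rw [← Finset.sum_filter_of_ne (p := fun t : Fin n => (t : ℕ) < k)
      (fun t _ hne => ?_), filter_lt_eq_map k hk, Finset.sum_map]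
    · rfl
    · by_contra hc
      rw [not_lt] at hc
      apply hne
      have hle : ¬ t ≤ e i := by
        rw [not_le, Fin.lt_def]
        exact lt_of_lt_of_le i.isLt hc
      rw [mu_zero b hle, zero_mul, zero_mul]
  have hATri : A.BlockTriangular OrderDual.toDual := by
    intro i j hij
    have : ¬ e j ≤ e i := by
      rw [not_le]
      exact hij
    exact mu_zero b this
  have hAdet : A.det = 1 := by
    rw [Matrix.det_of_lowerTriangular A hATri]
    refine Finset.prod_eq_one fun i _ => ?_
    simpa [hA] using mu_diag b hli (e i)
  rw [key, Matrix.det_mul, Matrix.det_mul, Matrix.det_transpose, hAdet, Matrix.det_diagonal,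
    one_mul, mul_one]

lemma li_of_det (b : Fin n → EuclideanSpace ℝ (Fin n))
    (hdet : (Matrix.of fun i j : Fin n => ⟪b i, b j⟫).det = 1) : LinearIndependent ℝ b := by
  rw [Fintype.linearIndependent_iff]
  intro c hc
  have h0 : (Matrix.of fun i j : Fin n => ⟪b i, b j⟫).mulVec c = 0 := by
    funext i
    simp only [Matrix.mulVec, dotProduct, Matrix.of_apply]
    have h1 : ∑ j, ⟪b i, b j⟫ * c j = ⟪b i, ∑ j, c j • b j⟫ := by
      rw [inner_sum]
      exact Finset.sum_congr rfl fun j _ => by rw [real_inner_smul_right]; ring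
    rw [h1, hc, inner_zero_right]
    rfl
  have hz := Matrix.eq_zero_of_mulVec_eq_zero (by rw [hdet]; exact one_ne_zero) h0
  exact fun i => congrFun hz i

lemma one_le_partial (b : Fin n → EuclideanSpace ℝ (Fin n))
    (hint : ∀ i j : Fin n, ∃ z : ℤ, ⟪b i, b j⟫ = z)
    (hli : LinearIndependent ℝ b) (k : ℕ) (hk : k ≤ n) :
    1 ≤ ∏ j : Fin k, ‖gso b (Fin.castLE hk j)‖ ^ 2 := by
  set e := Fin.castLE hk with he
  set G : Matrix (Fin k) (Fin k) ℝ := Matrix.of fun i j => ⟪b (e i), b (e j)⟫ with hG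
  choose Z hZ using fun i j : Fin k => hint (e i) (e j)
  have hmap : G = (Matrix.of Z).map (Int.cast : ℤ → ℝ) := by
    ext i j
    simp [hG, hZ]
  have hdet' : G.det = ∏ j : Fin k, ‖gso b (e j)‖ ^ 2 := det_gram b hli k hk
  have hcast : G.det = (((Matrix.of Z).det : ℤ) : ℝ) := by
    rw [hmap]
    exact ((Int.castRingHom ℝ).map_det (Matrix.of Z)).symm
  have hpos : 0 < G.det := by
    rw [hdet']
    exact Finset.prod_pos fun j _ => pow_pos (norm_pos_iff.mpr (gso_ne_zero hli _)) 2
  have hzpos : 0 < (Matrix.of Z).det := by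
    have := hpos
    rw [hcast] at this
    exact_mod_cast this
  have : (1 : ℝ) ≤ G.det := by
    rw [hcast]
    exact_mod_cast hzpos
  rwa [hdet'] at this

end Aux

/-- Bounds on the Gram–Schmidt vectors of an LLL-reduced basis of an
integral unimodular lattice. -/
theorem stmt_1 (n : ℕ) (b : Fin n → EuclideanSpace ℝ (Fin n))
    -- the lattice spanned by `b` is integral:
    (hint : ∀ i j : Fin n, ∃ z : ℤ, (inner ℝ (b i) (b j) : ℝ) = z)
    -- the lattice is unimodular (Gram determinant 1):
    (hdet : (Matrix.of fun i j : Fin n => (inner ℝ (b i) (b j) : ℝ)).det = 1)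
    -- the basis is LLL-reduced: size condition on Gram–Schmidt coefficients
    (hsize : ∀ i j : Fin n, j < i →
      |(inner ℝ (b i) (gso b j) : ℝ) / ‖gso b j‖ ^ 2| ≤ 1 / 2)
    -- and the Lovász-type condition `‖b*_i‖² ≤ 2‖b*_{i+1}‖²`:
    (hlovasz : ∀ i : Fin n, ∀ h : (i : ℕ) + 1 < n,
      ‖gso b i‖ ^ 2 ≤ 2 * ‖gso b ⟨(i : ℕ) + 1, h⟩‖ ^ 2) :
    -- then `2^(1-i) ≤ ‖b*_i‖² ≤ 2^(n-i)` (here `i` is 0-based, so shifted by 1):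
    ∀ i : Fin n, (2 : ℝ) ^ (-(i : ℤ)) ≤ ‖gso b i‖ ^ 2 ∧
      ‖gso b i‖ ^ 2 ≤ (2 : ℝ) ^ ((n : ℤ) - 1 - (i : ℤ)) := by
  have hli : LinearIndependent ℝ b := li_of_det b hdet
  set N : Fin n → ℝ := fun j => ‖gso b j‖ ^ 2 with hN
  have hNpos : ∀ j, 0 < N j :=
    fun j => pow_pos (norm_pos_iff.mpr (gso_ne_zero hli j)) 2
  -- chain inequality from the Lovász condition
  have hchain : ∀ (d : ℕ) (i j : Fin n), (j : ℕ) = (i : ℕ) + d → N i ≤ 2 ^ d * N j := by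
    intro d
    induction d with
    | zero =>
      intro i j h
      have hij : j = i := Fin.ext (by omega)
      rw [hij, pow_zero, one_mul]
    | succ d ih =>
      intro i j h
      have hj' : (i : ℕ) + d < n := by omega
      set j' : Fin n := ⟨(i : ℕ) + d, hj'⟩ with hj'def
      have h1 : N i ≤ 2 ^ d * N j' := ih i j' rfl
      have hlt : (j' : ℕ) + 1 < n := by
        simp only [hj'def]
        omega
      have h2 : N j' ≤ 2 * N j := by
        have hl := hlovasz j' hlt
        have hjj : (⟨(j' : ℕ) + 1, hlt⟩ : Fin n) = j := Fin.ext (by simp [hj'def]; omega)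
        rwa [hjj] at hl
      calc N i ≤ 2 ^ d * N j' := h1
        _ ≤ 2 ^ d * (2 * N j) := by
            have : (0:ℝ) ≤ 2 ^ d := by positivity
            nlinarith
        _ = 2 ^ (d + 1) * N j := by ring
  -- total product is 1
  have htot : ∏ j : Fin n, N j = 1 := by
    have h := det_gram b hli n le_rfl
    have hce : ∀ j : Fin n, Fin.castLE le_rfl j = j := fun j => Fin.ext rfl
    simp only [hce] at h
    rw [← h]
    exact hdet
  intro i
  set iv := (i : ℕ) with hiv
  constructor
  · -- lower bound
    have hk1 : iv + 1 ≤ n := i.isLt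
    have hd1 : 1 ≤ ∏ j : Fin (iv + 1), N (Fin.castLE hk1 j) :=
      one_le_partial b hint hli (iv + 1) hk1
    have hstep : ∀ j : Fin (iv + 1), N (Fin.castLE hk1 j) ≤ 2 ^ iv * N i := by
      intro j
      have hji : (i : ℕ) = ((Fin.castLE hk1 j : Fin n) : ℕ) + (iv - (j : ℕ)) := by
        have : (j : ℕ) ≤ iv := by omega
        simp only [Fin.coe_castLE]
        omega
      calc N (Fin.castLE hk1 j) ≤ 2 ^ (iv - (j : ℕ)) * N i := hchain _ _ i hji
        _ ≤ 2 ^ iv * N i := by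
            have h2 : (2:ℝ) ^ (iv - (j : ℕ)) ≤ 2 ^ iv :=
              pow_le_pow_right₀ one_le_two (by omega)
            nlinarith [hNpos i]
    have hpow : 1 ≤ (2 ^ iv * N i) ^ (iv + 1) := by
      calc (1:ℝ) ≤ ∏ j : Fin (iv + 1), N (Fin.castLE hk1 j) := hd1
        _ ≤ ∏ _j : Fin (iv + 1), (2 ^ iv * N i) :=
            Finset.prod_le_prod (fun j _ => (hNpos _).le) (fun j _ => hstep j)
        _ = (2 ^ iv * N i) ^ (iv + 1) := by
            rw [Finset.prod_const, Finset.card_univ, Fintype.card_fin]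
    have hone : 1 ≤ 2 ^ iv * N i :=
      (one_le_pow_iff_of_nonneg (by positivity) (Nat.succ_ne_zero iv)).mp hpow
    have h2p : (0:ℝ) < 2 ^ iv := by positivity
    have hzp : (2 : ℝ) ^ (-(i : ℤ)) = ((2:ℝ) ^ iv)⁻¹ := by
      rw [← hiv, _root_.zpow_neg, ← zpow_natCast]
    rw [hzp]
    exact le_of_mul_le_mul_left (by rw [mul_inv_cancel₀ h2p.ne']; exact hone) h2p
  · -- upper bound
    set m := n - 1 - iv with hm
    have hivn : iv < n := i.isLt
    set S := Finset.univ.filter (fun j : Fin n => (j : ℕ) < iv) with hS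
    set T := Finset.univ.filter (fun j : Fin n => ¬ (j : ℕ) < iv) with hT
    have hST : (∏ j ∈ S, N j) * (∏ j ∈ T, N j) = 1 := by
      rw [hS, hT, Finset.prod_filter_mul_prod_filter_not]
      exact htot
    have hSone : 1 ≤ ∏ j ∈ S, N j := by
      rw [hS, filter_lt_eq_map iv hivn.le, Finset.prod_map]
      exact one_le_partial b hint hli iv hivn.le
    have hTpos : 0 < ∏ j ∈ T, N j :=
      Finset.prod_pos fun j _ => hNpos j
    have hTle : ∏ j ∈ T, N j ≤ 1 := by nlinarith
    have hcard : T.card = m + 1 := by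
      have h1 : S.card + T.card = n := by
        rw [hS, hT]
        rw [Finset.card_filter_add_card_filter_not]
        exact Finset.card_univ.trans (Fintype.card_fin n)
      have h2 : S.card = iv := by
        rw [hS, filter_lt_eq_map iv hivn.le, Finset.card_map, Finset.card_univ,
          Fintype.card_fin]
      omega
    have h2m : (0:ℝ) < 2 ^ m := by positivity
    have hstep : ∀ j ∈ T, N i / 2 ^ m ≤ N j := by
      intro j hj
      rw [hT, Finset.mem_filter] at hj
      have hij : iv ≤ (j : ℕ) := by omega
      have hji : (j : ℕ) = (i : ℕ) + ((j : ℕ) - iv) := by omega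
      have hc := hchain ((j : ℕ) - iv) i j hji
      have h2 : (2:ℝ) ^ ((j : ℕ) - iv) ≤ 2 ^ m :=
        pow_le_pow_right₀ one_le_two (by have := j.isLt; omega)
      rw [div_le_iff₀ h2m]
      nlinarith [hNpos j]
    have hprod : (N i / 2 ^ m) ^ (m + 1) ≤ ∏ j ∈ T, N j := by
      calc (N i / 2 ^ m) ^ (m + 1) = ∏ _j ∈ T, (N i / 2 ^ m) := by
            rw [Finset.prod_const, hcard]
        _ ≤ ∏ j ∈ T, N j :=
            Finset.prod_le_prod (fun j _ => by positivity) hstep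
    have hle1 : N i / 2 ^ m ≤ 1 :=
      (pow_le_one_iff_of_nonneg (by positivity) (Nat.succ_ne_zero m)).mp
        (hprod.trans hTle)
    have hNi : N i ≤ 2 ^ m := (div_le_one h2m).mp hle1
    have hcast : (2 : ℝ) ^ ((n : ℤ) - 1 - (i : ℤ)) = (2:ℝ) ^ m := by
      rw [← zpow_natCast (2:ℝ) m]
      congr 1
      rw [hm, ← hiv]
      omega
    rw [hcast]
    exact hNi
end

section
/- Let $\{b_1,\ldots,b_n\}$ be an LLL-reduced basis of an integral unimodular lattice $L$, and let $\{c_1,\ldots,c_n\}$ be the dual basis (i.e., $\langle c_i, b_j \rangle = \delta_{ij}$). Then $|c_j|^2 \le (9/2)^{n-1}$ for all $j$. -/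
set_option maxHeartbeats 1000000

namespace Stmt3Aux
open Finset
open InnerProductSpace

variable {n : ℕ} (b c : Fin n → EuclideanSpace ℝ (Fin n))

lemma gso_orthogonal {i j : Fin n} (h : i ≠ j) : (inner ℝ (gso b i) (gso b j) : ℝ) = 0 :=
  @gramSchmidt_orthogonal ℝ _ _ _ _ (Fin n) _ _ (inferInstance : WellFoundedLT (Fin n)) b i j h

lemma b_eq (i : Fin n) :
    b i = gso b i + ∑ k ∈ Finset.Iio i,
      ((inner ℝ (b i) (gso b k) : ℝ) / (‖gso b k‖ ^ 2 : ℝ)) • gso b k := by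
  have := @gramSchmidt_def' ℝ _ _ _ _ (Fin n) _ _
    (inferInstance : WellFoundedLT (Fin n)) b i
  simp_rw [Submodule.starProjection_singleton] at this
  convert this using 3 with k hk
  · rfl
  rw [real_inner_comm]
  norm_num [gso]

lemma hli (hdual : ∀ i j : Fin n, (inner ℝ (c i) (b j) : ℝ) = if i = j then 1 else 0) :
    LinearIndependent ℝ b := by
  rw [Fintype.linearIndependent_iff]
  intro g hg i
  have h2 := congrArg (fun x => (inner ℝ (c i) x : ℝ)) hg
  simpa [inner_sum, inner_smul_right, hdual, Finset.sum_ite_eq'] using h2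

lemma gso_ne_zero (h : LinearIndependent ℝ b) (i : Fin n) : gso b i ≠ 0 :=
  @gramSchmidt_ne_zero ℝ _ _ _ _ (Fin n) _ _ (inferInstance : WellFoundedLT (Fin n)) _ i h

lemma inner_b_gso_self (i : Fin n) : (inner ℝ (b i) (gso b i) : ℝ) = ‖gso b i‖ ^ 2 := by
  conv_lhs => rw [b_eq b i]
  rw [inner_add_left, real_inner_self_eq_norm_sq, sum_inner]
  have : ∀ k ∈ Finset.Iio i, (inner ℝ ((((inner ℝ (b i) (gso b k) : ℝ)) / (‖gso b k‖ ^ 2 : ℝ)) • gso b k) (gso b i) : ℝ) = 0 := by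
    intro k hk
    rw [real_inner_smul_left, gso_orthogonal b (Finset.mem_Iio.mp hk).ne, mul_zero]
  rw [Finset.sum_eq_zero this, add_zero]

noncomputable def obasis : OrthonormalBasis (Fin n) ℝ (EuclideanSpace ℝ (Fin n)) :=
  @gramSchmidtOrthonormalBasis ℝ _ _ _ _ (Fin n) _ _
    (inferInstance : WellFoundedLT (Fin n)) _ _ finrank_euclideanSpace b

lemma obasis_apply (h : LinearIndependent ℝ b) (i : Fin n) :
    obasis b i = (‖gso b i‖ : ℝ)⁻¹ • gso b i := by
  have hne : gso b i ≠ 0 := gso_ne_zero b h i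
  have h2 : @gramSchmidtNormed ℝ _ _ _ _ (Fin n) _ _
      (inferInstance : WellFoundedLT (Fin n)) b i = (‖gso b i‖ : ℝ)⁻¹ • gso b i := rfl
  have hne2 : @gramSchmidtNormed ℝ _ _ _ _ (Fin n) _ _
      (inferInstance : WellFoundedLT (Fin n)) b i ≠ 0 := by
    rw [h2]; simp [hne, norm_eq_zero]
  rw [obasis, @gramSchmidtOrthonormalBasis_apply ℝ _ _ _ _ (Fin n) _ _
    (inferInstance : WellFoundedLT (Fin n)) _ _ finrank_euclideanSpace b i hne2, h2]

lemma inner_obasis (h : LinearIndependent ℝ b) (x : EuclideanSpace ℝ (Fin n)) (i : Fin n) :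
    (inner ℝ x (obasis b i) : ℝ) = (inner ℝ x (gso b i) : ℝ) / ‖gso b i‖ := by
  rw [obasis_apply b h, real_inner_smul_right, div_eq_inv_mul]

lemma parseval (x : EuclideanSpace ℝ (Fin n)) :
    ‖x‖ ^ 2 = ∑ i : Fin n, (inner ℝ x (obasis b i) : ℝ) ^ 2 := by
  have := (obasis b).sum_inner_mul_inner x x
  rw [← real_inner_self_eq_norm_sq, ← this]
  congr 1; ext i
  rw [sq, real_inner_comm x (obasis b i)]

lemma A_triangular {i l : Fin n} (h : i < l) : (inner ℝ (b i) (obasis b l) : ℝ) = 0 := by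
  rw [real_inner_comm]
  exact @gramSchmidtOrthonormalBasis_inv_triangular ℝ _ _ _ _ (Fin n) _ _
    (inferInstance : WellFoundedLT (Fin n)) _ _ finrank_euclideanSpace b i l h

section NuRec

variable (hdual : ∀ i j : Fin n, (inner ℝ (c i) (b j) : ℝ) = if i = j then 1 else 0)

include hdual in
lemma nu_rec (i j : Fin n) :
    (if j = i then (1:ℝ) else 0) = (inner ℝ (c j) (gso b i) : ℝ) +
      ∑ k ∈ Finset.Iio i, ((inner ℝ (b i) (gso b k) : ℝ) / ‖gso b k‖ ^ 2) *
        (inner ℝ (c j) (gso b k) : ℝ) := by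
  rw [← hdual j i]
  conv_lhs => rw [b_eq b i]
  rw [inner_add_right, inner_sum]
  congr 1
  refine Finset.sum_congr rfl fun k hk => ?_
  rw [real_inner_smul_right]

include hdual in
lemma nu_zero : ∀ (i j : Fin n), i < j → (inner ℝ (c j) (gso b i) : ℝ) = 0 := by
  suffices H : ∀ m : ℕ, ∀ (i j : Fin n), (i : ℕ) = m → i < j →
      (inner ℝ (c j) (gso b i) : ℝ) = 0 by
    exact fun i j h => H i i j rfl h
  intro m
  induction m using Nat.strong_induction_on with
  | _ m ih =>
    intro i j him hij
    have h1 := nu_rec b c hdual i j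
    rw [if_neg hij.ne'] at h1
    have hsum : ∑ k ∈ Finset.Iio i, ((inner ℝ (b i) (gso b k) : ℝ) / ‖gso b k‖ ^ 2) *
        (inner ℝ (c j) (gso b k) : ℝ) = 0 := by
      refine Finset.sum_eq_zero fun k hk => ?_
      have hki : k < i := Finset.mem_Iio.mp hk
      rw [ih k (him ▸ hki) k j rfl (hki.trans hij), mul_zero]
    rw [hsum, add_zero] at h1
    exact h1.symm

include hdual in
lemma nu_diag (j : Fin n) : (inner ℝ (c j) (gso b j) : ℝ) = 1 := by
  have h1 := nu_rec b c hdual j j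
  rw [if_pos rfl] at h1
  have hsum : ∑ k ∈ Finset.Iio j, ((inner ℝ (b j) (gso b k) : ℝ) / ‖gso b k‖ ^ 2) *
      (inner ℝ (c j) (gso b k) : ℝ) = 0 := by
    refine Finset.sum_eq_zero fun k hk => ?_
    rw [nu_zero b c hdual k j (Finset.mem_Iio.mp hk), mul_zero]
  rw [hsum, add_zero] at h1
  exact h1.symm

variable (hsize : ∀ i j : Fin n, j < i →
      |(inner ℝ (b i) (gso b j) : ℝ) / ‖gso b j‖ ^ 2| ≤ 1 / 2)

include hdual hsize in
lemma nu_abs_le {i j : Fin n} (hij : j < i) :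
    |(inner ℝ (c j) (gso b i) : ℝ)| ≤
      (1/2) * ∑ k ∈ Finset.Iio i, |(inner ℝ (c j) (gso b k) : ℝ)| := by
  have h1 := nu_rec b c hdual i j
  rw [if_neg hij.ne] at h1
  have h2 : (inner ℝ (c j) (gso b i) : ℝ) =
      -∑ k ∈ Finset.Iio i, ((inner ℝ (b i) (gso b k) : ℝ) / ‖gso b k‖ ^ 2) *
        (inner ℝ (c j) (gso b k) : ℝ) := by linarith
  rw [h2, abs_neg]
  calc |∑ k ∈ Finset.Iio i, ((inner ℝ (b i) (gso b k) : ℝ) / ‖gso b k‖ ^ 2) *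
        (inner ℝ (c j) (gso b k) : ℝ)|
      ≤ ∑ k ∈ Finset.Iio i, |((inner ℝ (b i) (gso b k) : ℝ) / ‖gso b k‖ ^ 2) *
        (inner ℝ (c j) (gso b k) : ℝ)| := Finset.abs_sum_le_sum_abs _ _
    _ ≤ ∑ k ∈ Finset.Iio i, (1/2) * |(inner ℝ (c j) (gso b k) : ℝ)| := by
        refine Finset.sum_le_sum fun k hk => ?_
        rw [abs_mul]
        exact mul_le_mul_of_nonneg_right (hsize i k (Finset.mem_Iio.mp hk)) (abs_nonneg _)
    _ = (1/2) * ∑ k ∈ Finset.Iio i, |(inner ℝ (c j) (gso b k) : ℝ)| := by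
        rw [Finset.mul_sum]


lemma Iio_succ_fin {m : ℕ} (h : m + 1 < n) (h' : m < n) :
    Finset.Iio (⟨m+1, h⟩ : Fin n) = insert (⟨m, h'⟩ : Fin n) (Finset.Iio ⟨m, h'⟩) := by
  ext k
  simp only [Finset.mem_Iio, Finset.mem_insert, Fin.lt_def, Fin.ext_iff]
  omega

include hdual hsize in
lemma S_bound (j : Fin n) : ∀ m : ℕ, (j:ℕ) ≤ m → ∀ hm : m < n,
    (∑ k ∈ Finset.Iio (⟨m, hm⟩ : Fin n), |(inner ℝ (c j) (gso b k) : ℝ)|) +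
      |(inner ℝ (c j) (gso b ⟨m, hm⟩) : ℝ)| ≤ (3/2 : ℝ) ^ (m - (j:ℕ)) := by
  intro m hjm
  induction m, hjm using Nat.le_induction with
  | base =>
    intro hm
    have hj : (⟨(j:ℕ), hm⟩ : Fin n) = j := rfl
    rw [hj, Nat.sub_self, pow_zero]
    have hz : ∑ k ∈ Finset.Iio j, |(inner ℝ (c j) (gso b k) : ℝ)| = 0 := by
      refine Finset.sum_eq_zero fun k hk => ?_
      rw [nu_zero b c hdual k j (Finset.mem_Iio.mp hk), abs_zero]
    rw [hz, zero_add, nu_diag b c hdual j, abs_one]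
  | succ m hjm ih =>
    intro hm1
    have hm : m < n := by omega
    have hnotmem : (⟨m, hm⟩ : Fin n) ∉ Finset.Iio (⟨m, hm⟩ : Fin n) := by simp
    have hins := Iio_succ_fin hm1 hm
    have hS : ∑ k ∈ Finset.Iio (⟨m+1, hm1⟩ : Fin n), |(inner ℝ (c j) (gso b k) : ℝ)| =
        |(inner ℝ (c j) (gso b ⟨m, hm⟩) : ℝ)| +
          ∑ k ∈ Finset.Iio (⟨m, hm⟩ : Fin n), |(inner ℝ (c j) (gso b k) : ℝ)| := by
      rw [hins, Finset.sum_insert hnotmem]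
    have hih := ih hm
    have habs : |(inner ℝ (c j) (gso b ⟨m+1, hm1⟩) : ℝ)| ≤
        (1/2) * ∑ k ∈ Finset.Iio (⟨m+1, hm1⟩ : Fin n), |(inner ℝ (c j) (gso b k) : ℝ)| :=
      nu_abs_le b c hdual hsize (by rw [Fin.lt_def]; simpa using by omega)
    have hpow : (3/2 : ℝ) ^ (m + 1 - (j:ℕ)) = (3/2) * (3/2 : ℝ) ^ (m - (j:ℕ)) := by
      rw [show m + 1 - (j:ℕ) = (m - (j:ℕ)) + 1 by omega, pow_succ]
      ring
    rw [hpow]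
    have hnn : (0:ℝ) ≤ ∑ k ∈ Finset.Iio (⟨m, hm⟩ : Fin n), |(inner ℝ (c j) (gso b k) : ℝ)| :=
      Finset.sum_nonneg fun k _ => abs_nonneg _
    rw [hS] at habs ⊢
    linarith

include hdual hsize in
lemma nu_bound {i j : Fin n} (hij : j < i) :
    |(inner ℝ (c j) (gso b i) : ℝ)| ≤ (1/2) * (3/2:ℝ) ^ ((i:ℕ) - (j:ℕ) - 1) := by
  obtain ⟨iv, hi⟩ := i
  have hj1 : (j:ℕ) < iv := hij
  have h1 : iv - 1 < n := by omega
  have hiv : (⟨iv, hi⟩ : Fin n) = ⟨(iv-1)+1, by omega⟩ := by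
    apply Fin.ext; simp; omega
  have key := S_bound b c hdual hsize j (iv - 1) (by omega) h1
  have h2 := nu_abs_le b c hdual hsize (i := ⟨iv, hi⟩) (j := j) hij
  rw [hiv] at h2 ⊢
  rw [Iio_succ_fin (by omega) h1, Finset.sum_insert (by simp)] at h2
  have : (iv - 1 + 1) - (j:ℕ) - 1 = (iv - 1) - (j:ℕ) := by omega
  rw [this]
  linarith

end NuRec

section Det

lemma A_diag (h : LinearIndependent ℝ b) (i : Fin n) :
    (inner ℝ (b i) (obasis b i) : ℝ) = ‖gso b i‖ := by
  rw [inner_obasis b h, inner_b_gso_self, sq]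
  have h0 : ‖gso b i‖ ≠ 0 := by
    simpa [norm_eq_zero] using gso_ne_zero b h i
  field_simp

lemma gram_eq_sum (i j : Fin n) :
    (inner ℝ (b i) (b j) : ℝ) =
      ∑ l : Fin n, (inner ℝ (b i) (obasis b l) : ℝ) * (inner ℝ (b j) (obasis b l) : ℝ) := by
  have h := (obasis b).sum_inner_mul_inner (b i) (b j)
  rw [← h]
  exact Finset.sum_congr rfl fun l _ => by rw [real_inner_comm (obasis b l) (b j)]

lemma sum_castLE (m : ℕ) (hmn : m ≤ n) (F : Fin n → ℝ)
    (hF : ∀ l : Fin n, m ≤ (l : ℕ) → F l = 0) :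
    ∑ l : Fin n, F l = ∑ l : Fin m, F (Fin.castLE hmn l) := by
  have h1 : ∑ l ∈ Finset.univ.map (Fin.castLEEmb hmn), F l = ∑ l : Fin m, F (Fin.castLE hmn l) :=
    Finset.sum_map _ _ _
  rw [← h1]
  refine (Finset.sum_subset (Finset.subset_univ _) fun l _ hl => ?_).symm
  refine hF l ?_
  by_contra hlt
  push_neg at hlt
  exact hl (Finset.mem_map.mpr ⟨⟨(l : ℕ), hlt⟩, Finset.mem_univ _, Fin.ext rfl⟩)

lemma minor_det (m : ℕ) (hmn : m ≤ n) :
    (Matrix.of fun i j : Fin m =>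
        (inner ℝ (b (Fin.castLE hmn i)) (b (Fin.castLE hmn j)) : ℝ)).det
      = (∏ k : Fin m, (inner ℝ (b (Fin.castLE hmn k)) (obasis b (Fin.castLE hmn k)) : ℝ)) ^ 2 := by
  set A' : Matrix (Fin m) (Fin m) ℝ :=
    Matrix.of fun i l : Fin m =>
      (inner ℝ (b (Fin.castLE hmn i)) (obasis b (Fin.castLE hmn l)) : ℝ) with hA'
  have hfac : (Matrix.of fun i j : Fin m =>
      (inner ℝ (b (Fin.castLE hmn i)) (b (Fin.castLE hmn j)) : ℝ)) = A' * A'.transpose := by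
    ext i j
    rw [Matrix.mul_apply]
    show (inner ℝ (b (Fin.castLE hmn i)) (b (Fin.castLE hmn j)) : ℝ) = _
    rw [gram_eq_sum]
    rw [sum_castLE m hmn _ (fun l hl => ?_)]
    · rfl
    · have : Fin.castLE hmn i < l := by
        rw [Fin.lt_def]
        exact lt_of_lt_of_le (by simpa using i.isLt) hl
      rw [A_triangular b this, zero_mul]
  rw [hfac, Matrix.det_mul, Matrix.det_transpose, ← sq]
  congr 1
  refine Matrix.det_of_lowerTriangular A' fun i j hij => ?_
  have : Fin.castLE hmn i < Fin.castLE hmn j := by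
    rw [Fin.lt_def]
    exact hij
  exact A_triangular b this

lemma minor_ge_one (hint : ∀ i j : Fin n, ∃ z : ℤ, (inner ℝ (b i) (b j) : ℝ) = z)
    (h : LinearIndependent ℝ b) (m : ℕ) (hmn : m ≤ n) :
    (1:ℝ) ≤ ∏ k : Fin m, ‖gso b (Fin.castLE hmn k)‖ ^ 2 := by
  choose z hz using hint
  set N : Matrix (Fin m) (Fin m) ℤ :=
    Matrix.of (fun i j : Fin m => z (Fin.castLE hmn i) (Fin.castLE hmn j)) with hN
  have hmap : N.map (Int.castRingHom ℝ) = Matrix.of (fun i j : Fin m =>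
      (inner ℝ (b (Fin.castLE hmn i)) (b (Fin.castLE hmn j)) : ℝ)) := by
    ext i j
    simp [hN, Matrix.map_apply, ← hz]
  have hdet : ((N.det : ℤ) : ℝ) = (∏ k : Fin m, ‖gso b (Fin.castLE hmn k)‖) ^ 2 := by
    have hd := RingHom.map_det (Int.castRingHom ℝ) N
    rw [RingHom.mapMatrix_apply, hmap, minor_det b m hmn] at hd
    rw [show ((N.det : ℤ) : ℝ) = (Int.castRingHom ℝ) N.det from rfl, hd]
    congr 1
    exact Finset.prod_congr rfl fun k _ => A_diag b h _
  have hpos : (0:ℝ) < (∏ k : Fin m, ‖gso b (Fin.castLE hmn k)‖) ^ 2 := by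
    apply pow_pos
    apply Finset.prod_pos
    intro k _
    exact norm_pos_iff.mpr (gso_ne_zero b h _)
  have h1 : (0:ℤ) < N.det := by
    by_contra hcon
    push_neg at hcon
    have : ((N.det : ℤ) : ℝ) ≤ 0 := by exact_mod_cast hcon
    rw [hdet] at this
    linarith
  have h2 : (1:ℤ) ≤ N.det := h1
  have h3 : (1:ℝ) ≤ (∏ k : Fin m, ‖gso b (Fin.castLE hmn k)‖) ^ 2 := by
    rw [← hdet]
    exact_mod_cast h2
  calc (1:ℝ) ≤ (∏ k : Fin m, ‖gso b (Fin.castLE hmn k)‖) ^ 2 := h3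
    _ = ∏ k : Fin m, ‖gso b (Fin.castLE hmn k)‖ ^ 2 := by
      rw [← Finset.prod_pow]


lemma B_chain (hlovasz : ∀ i : Fin n, ∀ h : (i : ℕ) + 1 < n,
      ‖gso b i‖ ^ 2 ≤ 2 * ‖gso b ⟨(i : ℕ) + 1, h⟩‖ ^ 2)
    (k : Fin n) : ∀ m : ℕ, (k : ℕ) ≤ m → ∀ hm : m < n,
    ‖gso b k‖ ^ 2 ≤ 2 ^ (m - (k:ℕ)) * ‖gso b ⟨m, hm⟩‖ ^ 2 := by
  intro m hkm
  induction m, hkm using Nat.le_induction with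
  | base =>
    intro hm
    have : (⟨(k:ℕ), hm⟩ : Fin n) = k := rfl
    rw [this, Nat.sub_self, pow_zero, one_mul]
  | succ m hkm ih =>
    intro hm1
    have hm : m < n := by omega
    have h1 := ih hm
    have h2 := hlovasz ⟨m, hm⟩ (by simpa using hm1)
    have h3 : (⟨(m:ℕ)+1, by simpa using hm1⟩ : Fin n) = ⟨m+1, hm1⟩ := rfl
    rw [h3] at h2
    have hpow : (2:ℝ) ^ (m + 1 - (k:ℕ)) = 2 * 2 ^ (m - (k:ℕ)) := by
      rw [show m + 1 - (k:ℕ) = (m - (k:ℕ)) + 1 by omega, pow_succ]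
      ring
    rw [hpow]
    nlinarith [sq_nonneg ‖gso b (⟨m, hm⟩ : Fin n)‖, pow_pos (show (0:ℝ) < 2 by norm_num) (m - (k:ℕ))]

lemma t_le (hint : ∀ i j : Fin n, ∃ z : ℤ, (inner ℝ (b i) (b j) : ℝ) = z)
    (h : LinearIndependent ℝ b)
    (hlovasz : ∀ i : Fin n, ∀ h : (i : ℕ) + 1 < n,
      ‖gso b i‖ ^ 2 ≤ 2 * ‖gso b ⟨(i : ℕ) + 1, h⟩‖ ^ 2)
    (i : Fin n) : (‖gso b i‖ ^ 2)⁻¹ ≤ (Real.sqrt 2) ^ (i : ℕ) := by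
  set β : ℝ := Real.sqrt 2 with hβ
  have hβpos : 0 < β := Real.sqrt_pos.mpr (by norm_num)
  have hβsq : β ^ 2 = 2 := Real.sq_sqrt (by norm_num)
  set m : ℕ := (i : ℕ) + 1 with hmdef
  have hmn : m ≤ n := i.isLt
  have hBpos : (0:ℝ) < ‖gso b i‖ ^ 2 := by
    apply pow_pos
    exact norm_pos_iff.mpr (gso_ne_zero b h i)
  -- each castLE k ≤ i
  have hstep : ∀ k : Fin m, ‖gso b (Fin.castLE hmn k)‖ ^ 2 ≤
      2 ^ ((i:ℕ) - (k:ℕ)) * ‖gso b i‖ ^ 2 := by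
    intro k
    have hk : ((Fin.castLE hmn k : Fin n) : ℕ) = (k : ℕ) := rfl
    have := B_chain b hlovasz (Fin.castLE hmn k) (i:ℕ) (by
      rw [hk]; omega) i.isLt
    simpa [Fin.eta] using this
  have h1 : (1:ℝ) ≤ ∏ k : Fin m, ‖gso b (Fin.castLE hmn k)‖ ^ 2 :=
    minor_ge_one b hint h m hmn
  have h2 : ∏ k : Fin m, ‖gso b (Fin.castLE hmn k)‖ ^ 2 ≤
      ∏ k : Fin m, 2 ^ ((i:ℕ) - (k:ℕ)) * ‖gso b i‖ ^ 2 := by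
    apply Finset.prod_le_prod
    · intro k _; positivity
    · intro k _; exact hstep k
  have h3 : ∏ k : Fin m, (2:ℝ) ^ ((i:ℕ) - (k:ℕ)) * ‖gso b i‖ ^ 2 =
      (2:ℝ) ^ (∑ k : Fin m, ((i:ℕ) - (k:ℕ))) * (‖gso b i‖ ^ 2) ^ m := by
    rw [Finset.prod_mul_distrib, Finset.prod_const, Finset.card_univ, Fintype.card_fin,
      Finset.prod_pow_eq_pow_sum]
  have hsum : (∑ k : Fin m, ((i:ℕ) - (k:ℕ))) * 2 = (i:ℕ) * m := by
    have := Fin.sum_univ_eq_sum_range (fun k => (i:ℕ) - k) m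
    rw [this]
    have hr : ∑ k ∈ Finset.range m, ((i:ℕ) - k) = ∑ k ∈ Finset.range m, k := by
      have := Finset.sum_range_reflect (fun k => k) m
      calc ∑ k ∈ Finset.range m, ((i:ℕ) - k) = ∑ k ∈ Finset.range m, (m - 1 - k) := by
            refine Finset.sum_congr rfl fun k hk => by
              have := Finset.mem_range.mp hk; omega
        _ = ∑ k ∈ Finset.range m, k := by
            rw [← this]
    rw [hr, Finset.sum_range_id_mul_two, hmdef, Nat.add_sub_cancel]
    ring
  -- 2 ^ Σ = β ^ (i * m)
  have hpow2 : (2:ℝ) ^ (∑ k : Fin m, ((i:ℕ) - (k:ℕ))) = β ^ ((i:ℕ) * m) := by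
    rw [← hβsq, ← pow_mul, ← hsum]
    ring_nf
  have hkey : (1:ℝ) ≤ (β ^ (i:ℕ) * ‖gso b i‖ ^ 2) ^ m := by
    have : (β ^ (i:ℕ) * ‖gso b i‖ ^ 2) ^ m = β ^ ((i:ℕ) * m) * (‖gso b i‖ ^ 2) ^ m := by
      rw [mul_pow, ← pow_mul]
    rw [this, ← hpow2, ← h3]
    exact le_trans h1 h2
  have hfin : (1:ℝ) ≤ β ^ (i:ℕ) * ‖gso b i‖ ^ 2 := by
    have hnn : (0:ℝ) ≤ β ^ (i:ℕ) * ‖gso b i‖ ^ 2 := by positivity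
    by_contra hcon
    push_neg at hcon
    have : (β ^ (i:ℕ) * ‖gso b i‖ ^ 2) ^ m < 1 ^ m :=
      pow_lt_pow_left₀ hcon hnn (by omega)
    rw [one_pow] at this
    linarith
  rw [inv_le_iff_one_le_mul₀ hBpos]
  linarith

end Det

section Final

lemma sqrt2_facts : (1:ℝ) ≤ Real.sqrt 2 ∧ Real.sqrt 2 ≤ 3/2 ∧ Real.sqrt 2 ^ 2 = 2 := by
  refine ⟨?_, ?_, Real.sq_sqrt (by norm_num)⟩
  · rw [show (1:ℝ) = Real.sqrt 1 from (Real.sqrt_one).symm]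
    exact Real.sqrt_le_sqrt (by norm_num)
  · rw [show (3/2:ℝ) = Real.sqrt ((3/2)^2) from (Real.sqrt_sq (by norm_num)).symm]
    exact Real.sqrt_le_sqrt (by norm_num)

lemma auxk (k : ℕ) :
    Real.sqrt 2 * ((9/4 * Real.sqrt 2) ^ k - 1) ≤
      4 * (9/4 * Real.sqrt 2 - 1) * ((9/2:ℝ) ^ k - 1) := by
  obtain ⟨hβ1, hβ2, hβsq⟩ := sqrt2_facts
  set β : ℝ := Real.sqrt 2
  induction k with
  | zero => simp
  | succ k ih =>
    have hrk : (9/4 * β) ^ k ≤ (9/2:ℝ) ^ k := by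
      apply pow_le_pow_left₀ (by nlinarith) (by nlinarith)
    have hrk0 : (0:ℝ) ≤ (9/4*β)^k := by positivity
    have h92 : (0:ℝ) ≤ (9/2:ℝ)^k := by positivity
    rw [pow_succ, pow_succ]
    nlinarith [ih, hrk, hrk0, h92]


lemma final (hint : ∀ i j : Fin n, ∃ z : ℤ, (inner ℝ (b i) (b j) : ℝ) = z)
    (hsize : ∀ i j : Fin n, j < i →
      |(inner ℝ (b i) (gso b j) : ℝ) / ‖gso b j‖ ^ 2| ≤ 1 / 2)
    (hlovasz : ∀ i : Fin n, ∀ h : (i : ℕ) + 1 < n,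
      ‖gso b i‖ ^ 2 ≤ 2 * ‖gso b ⟨(i : ℕ) + 1, h⟩‖ ^ 2)
    (hdual : ∀ i j : Fin n, (inner ℝ (c i) (b j) : ℝ) = if i = j then 1 else 0)
    (j : Fin n) : ‖c j‖ ^ 2 ≤ (9 / 2 : ℝ) ^ (n - 1) := by
  obtain ⟨hβ1, hβ2, hβsq⟩ := sqrt2_facts
  set β : ℝ := Real.sqrt 2 with hβdef
  have hβ0 : (0:ℝ) < β := by linarith
  have h : LinearIndependent ℝ b := hli b c hdual
  set j₀ : ℕ := (j : ℕ) with hj₀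
  set g : ℕ → ℝ := fun i =>
    if i < j₀ then 0 else if i = j₀ then β ^ j₀ else (1/4) * (9/4:ℝ) ^ (i - j₀ - 1) * β ^ i
    with hg
  -- per-index bound
  have hterm : ∀ i : Fin n, (inner ℝ (c j) (obasis b i) : ℝ) ^ 2 ≤ g (i : ℕ) := by
    intro i
    have hBpos : (0:ℝ) < ‖gso b i‖ ^ 2 :=
      pow_pos (norm_pos_iff.mpr (gso_ne_zero b h i)) 2
    have hsq : (inner ℝ (c j) (obasis b i) : ℝ) ^ 2 =
        (inner ℝ (c j) (gso b i) : ℝ) ^ 2 * (‖gso b i‖ ^ 2)⁻¹ := by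
      rw [inner_obasis b h, div_pow, div_eq_mul_inv]
    rcases lt_trichotomy i j with hij | hij | hij
    · have : (inner ℝ (c j) (gso b i) : ℝ) = 0 := nu_zero b c hdual i j hij
      rw [hsq, this]
      have : ((i:ℕ)) < j₀ := hij
      simp [hg, this]
    · have h1 : (inner ℝ (c j) (gso b j) : ℝ) = 1 := nu_diag b c hdual j
      rw [hsq, hij, h1, one_pow, one_mul]
      have := t_le b hint h hlovasz j
      simpa [hg, hj₀, hβdef] using this
    · have hnu := nu_bound b c hdual hsize hij
      have ht := t_le b hint h hlovasz i
      have hlt : ¬ ((i:ℕ) < j₀) := by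
        simp only [hj₀]; exact not_lt.mpr (le_of_lt hij)
      have hne : (i:ℕ) ≠ j₀ := by
        simp only [hj₀]; exact fun hc => (Fin.val_ne_of_ne hij.ne').elim (by omega)
      have hnusq : (inner ℝ (c j) (gso b i) : ℝ) ^ 2 ≤ (1/4) * (9/4:ℝ) ^ ((i:ℕ) - j₀ - 1) := by
        have h2 : (inner ℝ (c j) (gso b i) : ℝ) ^ 2 ≤ ((1/2) * (3/2:ℝ) ^ ((i:ℕ) - j₀ - 1)) ^ 2 := by
          rw [← sq_abs]
          apply pow_le_pow_left₀ (abs_nonneg _) hnu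
        refine h2.trans (le_of_eq ?_)
        rw [mul_pow, ← pow_mul, pow_mul']
        norm_num
      have htnn : (0:ℝ) ≤ (‖gso b i‖ ^ 2)⁻¹ := by positivity
      have hbnn : (0:ℝ) ≤ β ^ (i:ℕ) := by positivity
      rw [hsq]
      simp only [hg, if_neg hlt, if_neg hne]
      calc (inner ℝ (c j) (gso b i) : ℝ) ^ 2 * (‖gso b i‖ ^ 2)⁻¹
          ≤ ((1/4) * (9/4:ℝ) ^ ((i:ℕ) - j₀ - 1)) * (‖gso b i‖ ^ 2)⁻¹ :=
            mul_le_mul_of_nonneg_right hnusq htnn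
        _ ≤ ((1/4) * (9/4:ℝ) ^ ((i:ℕ) - j₀ - 1)) * β ^ (i:ℕ) := by
            apply mul_le_mul_of_nonneg_left ht
            positivity
  -- sum up
  have hsum1 : ‖c j‖ ^ 2 ≤ ∑ i ∈ Finset.range n, g i := by
    rw [parseval b (c j)]
    calc ∑ i : Fin n, (inner ℝ (c j) (obasis b i) : ℝ) ^ 2
        ≤ ∑ i : Fin n, g (i : ℕ) := Finset.sum_le_sum fun i _ => hterm i
      _ = ∑ i ∈ Finset.range n, g i := Fin.sum_univ_eq_sum_range g n
  have hjn : j₀ < n := j.isLt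
  set K : ℕ := n - 1 - j₀ with hK
  -- compute the sum
  have hsplit : ∑ i ∈ Finset.range n, g i =
      β ^ j₀ + ∑ i ∈ Finset.Ico (j₀+1) n, g i := by
    rw [Finset.range_eq_Ico, ← Finset.sum_Ico_consecutive g (by omega : 0 ≤ j₀+1) (by omega : j₀+1 ≤ n)]
    congr 1
    rw [← Finset.range_eq_Ico, Finset.sum_range_succ]
    have hz : ∑ i ∈ Finset.range j₀, g i = 0 := by
      refine Finset.sum_eq_zero fun i hi => ?_
      simp [hg, Finset.mem_range.mp hi]
    rw [hz, zero_add]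
    simp [hg]
  have hico : ∑ i ∈ Finset.Ico (j₀+1) n, g i =
      (1/4) * β ^ (j₀+1) * ∑ k ∈ Finset.range K, ((9/4) * β) ^ k := by
    rw [Finset.sum_Ico_eq_sum_range]
    have hKK : n - (j₀+1) = K := by omega
    rw [hKK, Finset.mul_sum]
    refine Finset.sum_congr rfl fun k hk => ?_
    have h1 : ¬ (j₀ + 1 + k < j₀) := by omega
    have h2 : ¬ (j₀ + 1 + k = j₀) := by omega
    simp only [hg, if_neg h1, if_neg h2]
    have h3 : j₀ + 1 + k - j₀ - 1 = k := by omega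
    rw [h3, mul_pow, pow_add]
    ring
  have hr1 : (1:ℝ) < (9/4) * β := by nlinarith
  have hgeom : ∑ k ∈ Finset.range K, ((9/4) * β) ^ k =
      (((9/4) * β) ^ K - 1) / ((9/4) * β - 1) := geom_sum_eq (by linarith) K
  have hbound2 : (1/4) * β ^ (j₀+1) * ((((9/4) * β) ^ K - 1) / ((9/4) * β - 1)) ≤
      β ^ j₀ * ((9/2:ℝ) ^ K - 1) := by
    have hden : (0:ℝ) < (9/4) * β - 1 := by linarith
    have haux := auxk K
    have hmul := mul_le_mul_of_nonneg_left haux (pow_nonneg hβ0.le j₀)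
    rw [show (1/4) * β ^ (j₀+1) * ((((9/4) * β) ^ K - 1) / ((9/4) * β - 1)) =
        (β ^ j₀ * (β * (((9/4) * β) ^ K - 1))) / (4 * ((9/4) * β - 1)) by
      rw [pow_succ]; simp only [div_eq_mul_inv, mul_inv]; ring]
    rw [div_le_iff₀ (by linarith)]
    calc β ^ j₀ * (β * (((9/4) * β) ^ K - 1))
        ≤ β ^ j₀ * (4 * (9/4 * β - 1) * ((9/2:ℝ) ^ K - 1)) := hmul
      _ = β ^ j₀ * ((9/2:ℝ) ^ K - 1) * (4 * ((9/4) * β - 1)) := by ring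
  have hfinal : ∑ i ∈ Finset.range n, g i ≤ β ^ j₀ * (9/2:ℝ) ^ K := by
    rw [hsplit, hico, hgeom]
    linarith [hbound2]
  have hlast : β ^ j₀ * (9/2:ℝ) ^ K ≤ (9/2:ℝ) ^ (n-1) := by
    have h1 : β ^ j₀ ≤ (9/2:ℝ) ^ j₀ := pow_le_pow_left₀ hβ0.le (by linarith) j₀
    have h2 : (9/2:ℝ) ^ j₀ * (9/2:ℝ) ^ K = (9/2:ℝ) ^ (n-1) := by
      rw [← pow_add]
      congr 1
      omega
    calc β ^ j₀ * (9/2:ℝ) ^ K ≤ (9/2:ℝ) ^ j₀ * (9/2:ℝ) ^ K := by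
          apply mul_le_mul_of_nonneg_right h1 (by positivity)
      _ = (9/2:ℝ) ^ (n-1) := h2
  linarith

end Final
end Stmt3Aux

/-- Bound on the dual basis of an LLL-reduced basis of an integral unimodular
lattice: `|c_j|² ≤ (9/2)^(n-1)`. -/
theorem stmt_3 (n : ℕ) (b c : Fin n → EuclideanSpace ℝ (Fin n))
    (hint : ∀ i j : Fin n, ∃ z : ℤ, (inner ℝ (b i) (b j) : ℝ) = z)
    (hdet : (Matrix.of fun i j : Fin n => (inner ℝ (b i) (b j) : ℝ)).det = 1)
    (hsize : ∀ i j : Fin n, j < i →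
      |(inner ℝ (b i) (gso b j) : ℝ) / ‖gso b j‖ ^ 2| ≤ 1 / 2)
    (hlovasz : ∀ i : Fin n, ∀ h : (i : ℕ) + 1 < n,
      ‖gso b i‖ ^ 2 ≤ 2 * ‖gso b ⟨(i : ℕ) + 1, h⟩‖ ^ 2)
    -- `c` is the dual basis: `⟨c_i, b_j⟩ = δ_ij`
    (hdual : ∀ i j : Fin n, (inner ℝ (c i) (b j) : ℝ) = if i = j then 1 else 0) :
    ∀ j : Fin n, ‖c j‖ ^ 2 ≤ (9 / 2 : ℝ) ^ (n - 1) := by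
  intro j
  exact Stmt3Aux.final b c hint hsize hlovasz hdual j
end

section
/- Let $L$ be an integral lattice, $m \ge 3$ an integer, and $C$ a coset of $mL$ in $L$. Then $C$ contains at most one element $x$ with $\langle x, x \rangle = 1$. -/
/-- A coset of `mL` in an integral lattice `L` (`m ≥ 3`) contains at most one
vector of length 1. -/
theorem stmt_5 (L : Type*) [AddCommGroup L] [Module.Free ℤ L] [Module.Finite ℤ L]
    (B : L →ₗ[ℤ] L →ₗ[ℤ] ℤ)
    (hsymm : ∀ x y : L, B x y = B y x)
    (hpos : ∀ x : L, x ≠ 0 → 0 < B x x)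
    (m : ℤ) (hm : 3 ≤ m)
    (x y : L) (hcoset : ∃ w : L, x - y = m • w)
    (hx : B x x = 1) (hy : B y y = 1) : x = y := by
  obtain ⟨w, hw⟩ := hcoset
  by_contra hne
  have hw0 : w ≠ 0 := by
    rintro rfl
    simp only [smul_zero] at hw
    exact hne (sub_eq_zero.mp hw)
  have hBw : 1 ≤ B w w := hpos w hw0
  have hnn : ∀ z : L, 0 ≤ B z z := by
    intro z
    rcases eq_or_ne z 0 with rfl | h
    · simp
    · exact (hpos z h).le
  set t := B x y with ht
  have hz : 0 ≤ B (x - t • y) (x - t • y) := hnn _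
  have hz' : B (x - t • y) (x - t • y) = 1 - t * t := by
    simp only [map_sub, map_smul, LinearMap.sub_apply, LinearMap.smul_apply, smul_eq_mul,
      hx, hy, ← ht, hsymm y x]
    ring
  have h1 : t * t ≤ 1 := by omega
  have h2 : B (x - y) (x - y) = 2 - 2 * t := by
    simp only [map_sub, LinearMap.sub_apply, hx, hy, ← ht, hsymm y x]
    ring
  have h3 : B (x - y) (x - y) = m * m * B w w := by
    rw [hw]
    simp only [map_smul, LinearMap.smul_apply, smul_eq_mul]
    ring
  have h4 : 9 ≤ m * m * B w w := by nlinarith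
  have h5 : -1 ≤ t := by nlinarith
  linarith
end

section
/- Let $L$ be an integral lattice of rank $n$, let $m \ge 2^{n/2} + 1$ be an integer, and let $x, y$ lie in the same coset of $mL$ in $L$. If $\langle x, x \rangle = 1$ and $\langle y, y \rangle \le (2^n - 1)\langle x, x \rangle$, then $y = x$. -/
/-- In an integral lattice of rank `n`, if `m ≥ 2^(n/2) + 1`, `x` has length 1
and `y` is in the coset `x + mL` with `⟨y,y⟩ ≤ (2ⁿ-1)⟨x,x⟩`, then `y = x`. -/
theorem stmt_6 (n : ℕ) (L : Type*) [AddCommGroup L] [Module.Free ℤ L] [Module.Finite ℤ L]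
    (hrank : Module.finrank ℤ L = n)
    (B : L →ₗ[ℤ] L →ₗ[ℤ] ℤ)
    (hsymm : ∀ x y : L, B x y = B y x)
    (hpos : ∀ x : L, x ≠ 0 → 0 < B x x)
    (m : ℤ) (hm : (2 : ℝ) ^ ((n : ℝ) / 2) + 1 ≤ (m : ℝ))
    (x y : L) (hcoset : ∃ w : L, x - y = m • w)
    (hx : B x x = 1) (hy : B y y ≤ (2 ^ n - 1) * B x x) : y = x := by
  obtain ⟨w, hw⟩ := hcoset
  have hsemi : ∀ v : L, 0 ≤ B v v := by
    intro v
    rcases eq_or_ne v 0 with rfl | h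
    · simp
    · exact (hpos v h).le
  -- basic real facts
  have hpow1 : (1 : ℝ) ≤ (2 : ℝ) ^ ((n : ℝ) / 2) := by
    have := Real.rpow_le_rpow_of_exponent_le (one_le_two (α := ℝ))
      (show (0 : ℝ) ≤ (n : ℝ) / 2 by positivity)
    simpa using this
  have hm2 : (2 : ℤ) ≤ m := by
    have : (2 : ℝ) ≤ (m : ℝ) := by linarith
    exact_mod_cast this
  have hsq : ((2 : ℝ) ^ ((n : ℝ) / 2)) ^ 2 = (2 : ℝ) ^ n := by
    rw [← Real.rpow_natCast ((2:ℝ) ^ ((n:ℝ)/2)) 2, ← Real.rpow_mul (by norm_num)]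
    norm_num
  have hmn : (2 : ℤ) ^ n ≤ (m - 1) ^ 2 := by
    have h1 : (2 : ℝ) ^ ((n : ℝ) / 2) ≤ (m : ℝ) - 1 := by linarith
    have h0 : (0 : ℝ) ≤ (2 : ℝ) ^ ((n : ℝ) / 2) := by positivity
    have := pow_le_pow_left₀ h0 h1 2
    rw [hsq] at this
    have : ((2 : ℤ) ^ n : ℝ) ≤ (((m - 1) ^ 2 : ℤ) : ℝ) := by push_cast; linarith
    exact_mod_cast this
  set t := B x y with ht
  have htt : t ^ 2 ≤ B y y := by
    have h := hsemi (y - t • x)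
    have hc : B (y - t • x) (y - t • x) = B y y - t ^ 2 := by
      simp only [map_sub, map_smul, LinearMap.sub_apply, LinearMap.smul_apply, smul_eq_mul, hx,
        hsymm y x]
      ring
    rw [hc] at h
    linarith
  rcases eq_or_ne w 0 with rfl | hne
  · have : x - y = 0 := by simpa using hw
    exact (sub_eq_zero.mp this).symm
  · have hww : 1 ≤ B w w := hpos w hne
    have hexp : B (x - y) (x - y) = m ^ 2 * B w w := by
      rw [hw]
      simp only [map_smul, LinearMap.smul_apply, smul_eq_mul]
      ring
    have hexp2 : B (x - y) (x - y) = 1 - 2 * t + B y y := by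
      simp only [map_sub, LinearMap.sub_apply, hx, hsymm y x, ← ht]
      ring
    exfalso
    have hyy : B y y ≤ 2 ^ n - 1 := by simpa [hx] using hy
    nlinarith [sq_nonneg (t + m), sq_nonneg m, mul_le_mul_of_nonneg_left hww (sq_nonneg m)]
end

section
/- Let $G$ be a finite abelian group with an element $u$ of order 2 and let $K$ be a subfield of ${\mathbb C}$. Then the intersection of the kernels of all ring homomorphisms $K\langle G \rangle \to {\mathbb C}$ is zero, where $K\langle G \rangle = K[G]/(u+1)$. -/
set_option maxHeartbeats 1000000
set_option synthInstance.maxHeartbeats 200000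


/-- The ideal `(u+1)` of the group ring `A[G]`. -/
noncomputable def modIdeal (A : Type*) [CommRing A] (G : Type*) [CommGroup G] (u : G) :
    Ideal (MonoidAlgebra A G) :=
  Ideal.span {MonoidAlgebra.single u 1 + 1}

/-- The modified group ring `A⟨G⟩ = A[G]/(u+1)`. -/
noncomputable abbrev ModGR (A : Type*) [CommRing A] (G : Type*) [CommGroup G] (u : G) :=
  MonoidAlgebra A G ⧸ modIdeal A G u

/-- The scaled trace `t : A⟨G⟩ → A`, sending (the class of) `∑ a_σ σ` to `a_1 - a_u`. -/
noncomputable def tr {A : Type*} [CommRing A] {G : Type*} [CommGroup G] {u : G}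
    (hu : u * u = 1) (x : ModGR A G u) : A :=
  Quotient.liftOn' x (fun f => f.coeff 1 - f.coeff u) (by
    intro f g h
    have h' : -f + g ∈ modIdeal A G u := QuotientAddGroup.leftRel_apply.mp h
    have hfg : g - f ∈ modIdeal A G u := by
      have : -f + g = g - f := by abel
      rwa [this] at h'
    obtain ⟨w, hw⟩ := Ideal.mem_span_singleton.mp hfg
    have huinv : u⁻¹ = u := inv_eq_of_mul_eq_one_right hu
    have key : ∀ y : G, g.coeff y - f.coeff y = w.coeff (u⁻¹ * y) + w.coeff y := by
      intro y
      rw [← Finsupp.sub_apply, ← MonoidAlgebra.coeff_sub, hw, add_mul, one_mul,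
        MonoidAlgebra.coeff_add, Finsupp.add_apply,
        MonoidAlgebra.coeff_single_mul_apply, one_mul]
    have e1 := key 1
    have e2 := key u
    rw [mul_one, huinv] at e1
    rw [inv_mul_cancel] at e2
    show f.coeff 1 - f.coeff u = g.coeff 1 - g.coeff u
    linear_combination e2 - e1)


section Aux

variable {G : Type*} [CommGroup G] [Fintype G]

noncomputable instance auxFintypeChars : Fintype (G →* ℂˣ) := by
  have : NeZero (Monoid.exponent G) := ⟨Monoid.exponent_ne_zero_of_finite⟩
  have : Finite (G →* ℂˣ) :=
    Finite.of_equiv G (CommGroup.monoidHom_mulEquiv_of_hasEnoughRootsOfUnity G ℂ).some.toEquiv.symm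
  exact Fintype.ofFinite _

lemma sum_chars {σ : G} (hσ : σ ≠ 1) : ∑ ψ : G →* ℂˣ, (ψ σ : ℂ) = 0 := by
  have : NeZero (Monoid.exponent G) := ⟨Monoid.exponent_ne_zero_of_finite⟩
  obtain ⟨χ, hχ⟩ := CommGroup.exists_apply_ne_one_of_hasEnoughRootsOfUnity G ℂ hσ
  have hχ' : (χ σ : ℂ) ≠ 1 := fun h => hχ (Units.ext h)
  refine eq_zero_of_mul_eq_self_left hχ' ?_
  rw [Finset.mul_sum]
  refine Fintype.sum_bijective _ (Group.mulLeft_bijective χ) _ _ fun ψ => ?_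
  simp [MonoidHom.mul_apply]

lemma sum_chars_eq [DecidableEq G] (σ : G) :
    ∑ ψ : G →* ℂˣ, (ψ σ : ℂ) = if σ = 1 then (Fintype.card (G →* ℂˣ) : ℂ) else 0 := by
  split_ifs with h
  · simp [h]
  · exact sum_chars h

lemma chars_injective {K : Subfield ℂ} {f : MonoidAlgebra K G}
    (hf : ∀ ψ : G →* ℂˣ,
      MonoidAlgebra.lift K ℂ G ((Units.coeHom ℂ).comp ψ) f = 0) : f = 0 := by
  classical
  have hsum : ∀ ψ : G →* ℂˣ, ∑ σ : G, (f.coeff σ : ℂ) * (ψ σ : ℂ) = 0 := by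
    intro ψ
    have := hf ψ
    rw [MonoidAlgebra.lift_apply, Finsupp.sum_fintype] at this
    · simp [Algebra.smul_def] at this; exact this
    · intro a; simp
  ext y
  have key : (f.coeff y : ℂ) * (Fintype.card (G →* ℂˣ) : ℂ) = 0 := by
    calc (f.coeff y : ℂ) * (Fintype.card (G →* ℂˣ) : ℂ)
        = ∑ σ : G, (f.coeff σ : ℂ) * (if σ = y then (Fintype.card (G →* ℂˣ) : ℂ) else 0) := by
          simp
      _ = ∑ σ : G, (f.coeff σ : ℂ) * ∑ ψ : G →* ℂˣ, (ψ (y⁻¹ * σ) : ℂ) := by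
          refine Finset.sum_congr rfl fun σ _ => ?_
          rw [sum_chars_eq]
          congr 1
          simp [inv_mul_eq_one, eq_comm]
      _ = ∑ σ : G, ∑ ψ : G →* ℂˣ, (f.coeff σ : ℂ) * (ψ (y⁻¹ * σ) : ℂ) := by
          simp [Finset.mul_sum]
      _ = ∑ ψ : G →* ℂˣ, ((ψ y : ℂ))⁻¹ * ∑ σ : G, (f.coeff σ : ℂ) * (ψ σ : ℂ) := by
          rw [Finset.sum_comm]
          refine Finset.sum_congr rfl fun ψ _ => ?_
          rw [Finset.mul_sum]
          refine Finset.sum_congr rfl fun σ _ => ?_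
          simp only [map_mul, map_inv, Units.val_mul]
          rw [Units.val_inv_eq_inv_val]
          ring
      _ = 0 := by simp [hsum]
  have hcard : (Fintype.card (G →* ℂˣ) : ℂ) ≠ 0 := by
    exact_mod_cast Fintype.card_ne_zero
  have h0 : (f.coeff y : ℂ) = 0 := by
    rcases mul_eq_zero.mp key with h | h
    · exact h
    · exact absurd h hcard
  have : f.coeff y = 0 := Subtype.coe_injective (by simpa using h0)
  simpa using this

end Aux

/-- The intersection of the kernels of all ring homomorphisms `K⟨G⟩ → ℂ` is zero. -/
theorem stmt_9 (G : Type*) [CommGroup G] [Fintype G] (u : G) (hu1 : u ≠ 1)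
    (hu2 : u * u = 1) (K : Subfield ℂ) (x : ModGR K G u)
    (hx : ∀ φ : ModGR K G u →+* ℂ, φ x = 0) : x = 0 := by
  classical
  obtain ⟨f, rfl⟩ := Ideal.Quotient.mk_surjective x
  rw [Ideal.Quotient.eq_zero_iff_mem]
  -- the element h = f - u·f is killed by all characters
  set p : MonoidAlgebra K G := MonoidAlgebra.single u 1 + 1 with hp
  set h : MonoidAlgebra K G := f - MonoidAlgebra.single u 1 * f with hh
  have hchar : ∀ ψ : G →* ℂˣ,
      MonoidAlgebra.lift K ℂ G ((Units.coeHom ℂ).comp ψ) h = 0 := by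
    intro ψ
    set E := MonoidAlgebra.lift K ℂ G ((Units.coeHom ℂ).comp ψ) with hE
    have hEu : E (MonoidAlgebra.single u 1) = (ψ u : ℂ) := by
      rw [hE, MonoidAlgebra.lift_single]
      simp [Algebra.smul_def]
    have hE2 : E h = (1 - (ψ u : ℂ)) * E f := by
      rw [hh, map_sub, map_mul, hEu]; ring
    have hsq : ((ψ u : ℂ)) ^ 2 = 1 := by
      have : ψ u * ψ u = 1 := by rw [← map_mul, hu2, map_one]
      have := congrArg (Units.val) this
      push_cast at this
      rw [sq]; exact_mod_cast this
    have hmm : (ψ u : ℂ) * (ψ u : ℂ) = 1 := by rw [← sq]; exact hsq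
    rcases mul_self_eq_one_iff.mp hmm with h1 | h1
    · rw [hE2, h1]; ring
    · -- ψ u = -1 : build the ring hom and use hx
      have hker : ∀ a ∈ modIdeal K G u, E a = 0 := by
        intro a ha
        obtain ⟨w, rfl⟩ := Ideal.mem_span_singleton.mp ha
        rw [map_mul, map_add, hEu, h1, map_one]
        ring
      let φ : ModGR K G u →+* ℂ := Ideal.Quotient.lift (modIdeal K G u) E.toRingHom hker
      have := hx φ
      have hφ : φ (Ideal.Quotient.mk (modIdeal K G u) f) = E f := rfl
      rw [hφ] at this
      rw [hE2, this]; ring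
  have h0 : h = 0 := chars_injective hchar
  have hfix : MonoidAlgebra.single u 1 * f = f := by
    have := sub_eq_zero.mp h0
    exact this.symm
  -- f = (u+1) * ((1/2)·f)
  rw [modIdeal, Ideal.mem_span_singleton]
  refine ⟨MonoidAlgebra.single (1 : G) (2⁻¹ : K) * f, ?_⟩
  have expand : (MonoidAlgebra.single u (1 : K) + 1) * (MonoidAlgebra.single (1:G) (2⁻¹:K) * f)
      = MonoidAlgebra.single (1:G) (2⁻¹:K) * (MonoidAlgebra.single u (1:K) * f)
        + MonoidAlgebra.single (1:G) (2⁻¹:K) * f := by ring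
  rw [expand, hfix, ← add_mul, ← MonoidAlgebra.single_add]
  have : (2⁻¹ + 2⁻¹ : K) = 1 := by
    rw [← two_mul, mul_inv_cancel₀ (two_ne_zero)]
  rw [this]
  have hone : MonoidAlgebra.single (1 : G) (1 : K) * f = f := by
    rw [show MonoidAlgebra.single (1 : G) (1 : K) = 1 from (MonoidAlgebra.one_def).symm, one_mul]
  exact hone.symm
end

section
/- Let $G$ be a finite abelian group with element $u$ of order 2, with $n = \#G/2$, and let $S$ be a set of coset representatives of $G/\langle u \rangle$. In $A\langle G \rangle = A[G]/(u+1)$ for a commutative ring $A$: if $a = \sum_{\sigma \in S} a_\sigma \sigma$, then $t(a\bar{a}) = \sum_{\sigma \in S} a_\sigma^2$, where $\bar{a} = \sum_\sigma a_\sigma \sigma^{-1}$ and $t$ is the scaled trace. -/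
/-- If `a = ∑_{σ ∈ S} a_σ σ` then `t(a·ā) = ∑_{σ ∈ S} a_σ²`, where `S` is a set
of coset representatives of `G/⟨u⟩`. -/
theorem stmt_11 (A : Type*) [CommRing A] (G : Type*) [CommGroup G] [Fintype G]
    (u : G) (hu1 : u ≠ 1) (hu2 : u * u = 1)
    (S : Finset G) (hS : ∀ g : G, ∃! s, s ∈ S ∧ (g = s ∨ g = u * s))
    (c : G → A) :
    tr hu2
      ((∑ s ∈ S, Ideal.Quotient.mk (modIdeal A G u) (MonoidAlgebra.single s (c s))) *
        (∑ s ∈ S, Ideal.Quotient.mk (modIdeal A G u) (MonoidAlgebra.single s⁻¹ (c s)))) =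
      ∑ s ∈ S, c s ^ 2 := by
  have htr : ∀ f : MonoidAlgebra A G, tr hu2 (Ideal.Quotient.mk (modIdeal A G u) f) = f.coeff 1 - f.coeff u :=
    fun f => rfl
  classical
  rw [← map_sum, ← map_sum, ← map_mul, htr, Finset.sum_mul_sum]
  simp only [MonoidAlgebra.single_mul_single]
  have key : ∀ s ∈ S, ∀ t ∈ S, s * t⁻¹ ≠ u := by
    intro s hs t ht h
    have hst : s = u * t := by rw [← h]; group
    obtain ⟨x, hx, hx2⟩ := hS s
    have h1 : t = x := hx2 t ⟨ht, Or.inr hst⟩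
    have h2 : s = x := hx2 s ⟨hs, Or.inl rfl⟩
    rw [h1, ← h2] at hst
    exact hu1 (right_eq_mul.mp hst)
  have hzero : (∑ s ∈ S, ∑ t ∈ S, MonoidAlgebra.single (s * t⁻¹) (c s * c t) : MonoidAlgebra A G).coeff u = 0 := by
    rw [MonoidAlgebra.coeff_sum, Finset.sum_apply']
    refine Finset.sum_eq_zero fun s hs => ?_
    rw [MonoidAlgebra.coeff_sum, Finset.sum_apply']
    refine Finset.sum_eq_zero fun t ht => ?_
    rw [MonoidAlgebra.coeff_single, Finsupp.single_apply, if_neg (key s hs t ht)]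
  have hone : (∑ s ∈ S, ∑ t ∈ S, MonoidAlgebra.single (s * t⁻¹) (c s * c t) : MonoidAlgebra A G).coeff 1 =
      ∑ s ∈ S, c s ^ 2 := by
    rw [MonoidAlgebra.coeff_sum, Finset.sum_apply']
    refine Finset.sum_congr rfl fun s hs => ?_
    rw [MonoidAlgebra.coeff_sum, Finset.sum_apply']
    have : ∀ t ∈ S, (MonoidAlgebra.single (s * t⁻¹) (c s * c t) : MonoidAlgebra A G).coeff 1 =
        if s = t then c s * c t else 0 := by
      intro t ht
      rw [MonoidAlgebra.coeff_single, Finsupp.single_apply, mul_inv_eq_one]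
    rw [Finset.sum_congr rfl this, Finset.sum_ite_eq, if_pos hs, ← sq]
  rw [hone, hzero, sub_zero]
end

section
/- Let $L$ be an invertible $G$-lattice and $e \in L$ with $\langle e, e \rangle = 1$. Then the stabilizer $\{\sigma \in G : \sigma e = e\}$ is trivial, and $\langle e, \sigma e \rangle$ equals $1$ if $\sigma = 1$, $-1$ if $\sigma = u$, and $0$ for all other $\sigma \in G$. -/
set_option linter.unusedSectionVars false

open Finset Submodule

section Aux
variable {G : Type*} [CommGroup G] [Fintype G] [DecidableEq G]
variable {L : Type*} [AddCommGroup L]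

/-- positive semidefiniteness -/
lemma aux_B_nonneg (B : L →ₗ[ℤ] L →ₗ[ℤ] ℤ) (hpos : ∀ x : L, x ≠ 0 → 0 < B x x)
    (x : L) : 0 ≤ B x x := by
  rcases eq_or_ne x 0 with h | h
  · simp [h]
  · exact (hpos x h).le

lemma aux_expand_sub (B : L →ₗ[ℤ] L →ₗ[ℤ] ℤ) (hsymm : ∀ x y : L, B x y = B y x)
    (x y : L) : B (x - y) (x - y) = B x x - 2 * B x y + B y y := by
  have h := hsymm x y
  simp only [map_sub, LinearMap.sub_apply]
  ring_nf
  omega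

lemma aux_bound (B : L →ₗ[ℤ] L →ₗ[ℤ] ℤ) (hsymm : ∀ x y : L, B x y = B y x)
    (hpos : ∀ x : L, x ≠ 0 → 0 < B x x) {x y : L} (hx : B x x = 1) (hy : B y y = 1) :
    -1 ≤ B x y ∧ B x y ≤ 1 := by
  have h1 := aux_B_nonneg B hpos (x - y)
  have h2 := aux_B_nonneg B hpos (x + y)
  rw [aux_expand_sub B hsymm] at h1
  have h3 : B (x + y) (x + y) = B x x + 2 * B x y + B y y := by
    have h := hsymm x y
    simp only [map_add, LinearMap.add_apply]
    omega
  rw [h3] at h2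
  omega

lemma aux_eq_of_inner_one (B : L →ₗ[ℤ] L →ₗ[ℤ] ℤ) (hsymm : ∀ x y : L, B x y = B y x)
    (hpos : ∀ x : L, x ≠ 0 → 0 < B x x) {x y : L} (hx : B x x = 1) (hy : B y y = 1)
    (hxy : B x y = 1) : x = y := by
  have h1 : B (x - y) (x - y) = 0 := by rw [aux_expand_sub B hsymm]; omega
  by_contra h
  exact absurd h1 (hpos (x - y) (sub_ne_zero.2 h)).ne'

/-- A torsion-free unimodular module of nonzero finite rank is finite free: basis. -/
lemma aux_basis (B : L →ₗ[ℤ] L →ₗ[ℤ] ℤ)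
    (hbij : Function.Bijective fun x : L => B x)
    {n : ℕ} (hn : n ≠ 0) (hrank : Module.finrank ℤ L = n) :
    Nonempty (Module.Basis (Fin n) ℤ L) := by
  have hinj : Function.Injective fun x : L => B x := hbij.1
  haveI : NoZeroSMulDivisors ℤ L := by
    refine ⟨fun {c x} h => ?_⟩
    rcases eq_or_ne c 0 with hc | hc
    · exact Or.inl hc
    · refine Or.inr (hinj ?_)
      have : B (c • x) = B 0 := by rw [h]
      simp only [map_smul, map_zero] at this
      have : ∀ y, c * B x y = 0 := fun y => by
        have := congrArg (fun f => f y) this; simpa using this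
      show B x = B 0
      rw [map_zero]
      refine LinearMap.ext fun y => ?_
      have := this y
      simp only [LinearMap.zero_apply]
      exact (mul_eq_zero.1 this).resolve_left hc
  -- rank is finite and equals n
  have hrk : Module.rank ℤ L = (n : Cardinal) := by
    by_cases h : Module.rank ℤ L < Cardinal.aleph0
    · rw [← Cardinal.cast_toNat_of_lt_aleph0 h]
      norm_cast
    · exfalso
      have := Cardinal.toNat_apply_of_aleph0_le (not_lt.1 h)
      rw [Module.finrank] at hrank
      omega
  -- bound on independent families
  have hbound : ∀ m : ℕ, ∀ v : Fin m → L, LinearIndependent ℤ v → m ≤ n := by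
    intro m v hv
    have := hv.cardinal_lift_le_rank
    rw [hrk, Cardinal.mk_fin] at this
    simp only [Cardinal.lift_natCast] at this
    exact_mod_cast this
  -- maximal independent family
  set A : Set ℕ := {m | ∃ v : Fin m → L, LinearIndependent ℤ v} with hA
  have hA0 : 0 ∈ A := ⟨fun i => 0, linearIndependent_empty_type⟩
  have hAbdd : BddAbove A := ⟨n, fun m hm => by obtain ⟨v, hv⟩ := hm; exact hbound m v hv⟩
  set m₀ := sSup A with hm₀
  obtain ⟨v, hv⟩ : m₀ ∈ A := Nat.sSup_mem ⟨0, hA0⟩ hAbdd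
  -- maximality: every vector has a multiple in the span
  have hmax : ∀ z : L, ∃ c : ℤ, c ≠ 0 ∧ c • z ∈ span ℤ (Set.range v) := by
    intro z
    by_contra hcon
    push_neg at hcon
    have hins : LinearIndependent ℤ (Fin.cons z v : Fin (m₀ + 1) → L) := by
      refine hv.fin_cons' z v ?_
      intro c y hy hcy
      by_contra hc
      refine hcon c hc ?_
      have hz : c • z = -(y : L) := eq_neg_of_add_eq_zero_left hcy
      rw [hz]
      exact neg_mem hy
    have : m₀ + 1 ≤ m₀ := le_csSup hAbdd ⟨_, hins⟩
    omega
  -- dual embedding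
  let α : Module.Dual ℤ L →ₗ[ℤ] (Fin m₀ → ℤ) :=
    { toFun := fun f => fun i => f (v i)
      map_add' := fun f g => rfl
      map_smul' := fun c f => rfl }
  have hα : Function.Injective α := by
    rw [injective_iff_map_eq_zero]
    intro f hf
    have hfv : ∀ i, f (v i) = 0 := fun i => congrFun hf i
    refine LinearMap.ext fun z => ?_
    obtain ⟨c, hc, hcz⟩ := hmax z
    have h1 : f (c • z) = 0 := by
      have hsp : span ℤ (Set.range v) ≤ LinearMap.ker f := by
        rw [span_le]
        rintro _ ⟨i, rfl⟩
        exact hfv i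
      exact hsp hcz
    rw [map_smul, smul_eq_mul] at h1
    simpa using (mul_eq_zero.1 h1).resolve_left hc
  haveI : IsNoetherian ℤ (Module.Dual ℤ L) := isNoetherian_of_injective α hα
  let E : L ≃ₗ[ℤ] Module.Dual ℤ L := LinearEquiv.ofBijective B hbij
  haveI : IsNoetherian ℤ L := isNoetherian_of_injective E.toLinearMap E.injective
  haveI : Module.Finite ℤ L := ⟨IsNoetherian.noetherian ⊤⟩
  haveI : Module.Free ℤ L := Module.free_of_finite_type_torsion_free'
  exact ⟨(Module.finBasis ℤ L).reindex (finCongr hrank)⟩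

end Aux

section Comb
variable {G : Type*} [CommGroup G] [Fintype G] [DecidableEq G]

lemma aux_zpow_u {u : G} (hu2 : u * u = 1) (α : ℤ) :
    u ^ α = 1 ∨ u ^ α = u := by
  rcases Int.even_or_odd α with ⟨k, hk⟩ | ⟨k, hk⟩
  · left; rw [hk, zpow_add, ← mul_zpow, hu2, one_zpow]
  · right; rw [hk, zpow_add, zpow_one, zpow_mul, zpow_two, hu2, one_zpow, one_mul]

lemma aux_zpow_val {σ : G} {p : ℕ} [NeZero p] (hord : orderOf σ = p) (β : ℤ) :
    σ ^ β = σ ^ (((β : ZMod p)).val) := by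
  have h := zpow_mod_orderOf σ β
  rw [hord] at h
  calc σ ^ β = σ ^ (β % (p : ℤ)) := h.symm
    _ = σ ^ ((((β : ZMod p)).val : ℤ)) := by rw [ZMod.val_intCast]
    _ = σ ^ (((β : ZMod p)).val) := zpow_natCast _ _

/-- The combinatorial core. -/
lemma aux_comb {u σ : G} (hu1 : u ≠ 1) (hu2 : u * u = 1)
    {p : ℕ} [NeZero p] (hord : orderOf σ = p) (huσ : u ∉ Subgroup.zpowers σ)
    (a : G → ZMod p)
    (hcond : ∀ τ, a (σ⁻¹ * (u * τ)) - a (u * τ) = a (σ⁻¹ * τ) - a τ) :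
    ∃ d : G → ZMod p, ∀ τ,
      a (u * τ) - (∑ t : ZMod p, d (σ ^ (t.val) * (u * τ)))
        = a τ - ∑ t : ZMod p, d (σ ^ (t.val) * τ) := by
  classical
  set c : G → ZMod p := fun τ => a (u * τ) - a τ with hc
  have huu : ∀ τ : G, u * (u * τ) = τ := by
    intro τ; rw [← mul_assoc, hu2, one_mul]
  have hcu : ∀ τ, c (u * τ) = - c τ := by
    intro τ; simp only [hc, huu τ]; ring
  have hcσ : ∀ τ, c (σ * τ) = c τ := by
    intro τ
    have h := hcond (σ * τ)
    have e1 : σ⁻¹ * (u * (σ * τ)) = u * τ := by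
      rw [mul_left_comm u σ τ, ← mul_assoc, inv_mul_cancel, one_mul]
    have e2 : σ⁻¹ * (σ * τ) = τ := by rw [← mul_assoc, inv_mul_cancel, one_mul]
    rw [e1, e2] at h
    simp only [hc]
    try ring
    linear_combination -h
  have hcσn : ∀ (m : ℕ) τ, c (σ ^ m * τ) = c τ := by
    intro m
    induction m with
    | zero => intro τ; simp
    | succ k ih =>
      intro τ
      rw [pow_succ, mul_comm (σ ^ k) σ, mul_assoc, hcσ _]
      exact ih τ
  set J : Subgroup G := Subgroup.zpowers u ⊔ Subgroup.zpowers σ with hJ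
  have hσJ : σ ∈ J := by
    have h : Subgroup.zpowers σ ≤ J := le_sup_right
    exact h (Subgroup.mem_zpowers σ)
  have huJ : u ∈ J := by
    have h : Subgroup.zpowers u ≤ J := le_sup_left
    exact h (Subgroup.mem_zpowers u)
  set w : G → G := fun τ => Quotient.out (QuotientGroup.mk (s := J) τ) with hwdef
  have hwc : ∀ τ, QuotientGroup.mk (s := J) (w τ) = QuotientGroup.mk τ :=
    fun τ => Quotient.out_eq _
  have hmkσ : ∀ (m : ℕ) (τ : G),
      QuotientGroup.mk (s := J) (σ ^ m * τ) = QuotientGroup.mk τ := by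
    intro m τ
    rw [QuotientGroup.eq]
    have hcomp : (σ ^ m * τ)⁻¹ * τ = (σ ^ m)⁻¹ := by
      rw [mul_inv_rev, mul_assoc, mul_comm τ⁻¹, mul_assoc, mul_inv_cancel, mul_one]
    rw [hcomp]
    exact J.inv_mem (J.pow_mem hσJ m)
  have hmku : ∀ τ : G, QuotientGroup.mk (s := J) (u * τ) = QuotientGroup.mk τ := by
    intro τ
    rw [QuotientGroup.eq]
    have hcomp : (u * τ)⁻¹ * τ = u⁻¹ := by
      rw [mul_inv_rev, mul_assoc, mul_comm τ⁻¹, mul_assoc, mul_inv_cancel, mul_one]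
    rw [hcomp]
    exact J.inv_mem huJ
  have hwσ : ∀ (m : ℕ) (τ : G), w (σ ^ m * τ) = w τ := by
    intro m τ; simp only [hwdef]; rw [hmkσ m τ]
  have hwu : ∀ τ : G, w (u * τ) = w τ := by
    intro τ; simp only [hwdef]; rw [hmku τ]
  -- injectivity of t ↦ σ ^ t.val * τ
  have hpow_inj : ∀ t t' : ZMod p, σ ^ (t.val) = σ ^ (t'.val) → t = t' := by
    intro t t' h
    refine ZMod.val_injective p ?_
    refine pow_injOn_Iio_orderOf ?_ ?_ h <;> · rw [hord]; exact Set.mem_Iio.2 (ZMod.val_lt _)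
  set d : G → ZMod p := fun x => if x = w x then - c x else 0 with hd
  refine ⟨d, fun τ => ?_⟩
  -- decompose w τ
  have hWJ : τ⁻¹ * w τ ∈ J := by
    have := (QuotientGroup.eq (s := J)).1 (hwc τ).symm
    exact this
  obtain ⟨y, hy, z, hz, hyz⟩ := Subgroup.mem_sup.1 hWJ
  obtain ⟨α, rfl⟩ := Subgroup.mem_zpowers_iff.1 hy
  obtain ⟨β, rfl⟩ := Subgroup.mem_zpowers_iff.1 hz
  set t₀ : ZMod p := (β : ZMod p) with ht₀
  have h1 : w τ = τ * (u ^ α * σ ^ β) := by rw [hyz, mul_inv_cancel_left]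
  have hW : w τ = u ^ α * (σ ^ (t₀.val) * τ) := by
    rw [h1, mul_comm τ (u ^ α * σ ^ β), mul_assoc, ← aux_zpow_val hord β]
  have hmemz : ∀ t t' : ZMod p, (σ ^ (t.val))⁻¹ * σ ^ (t'.val) ∈ Subgroup.zpowers σ := by
    intro t t'
    refine Subgroup.mem_zpowers_iff.2 ⟨(t'.val : ℤ) - (t.val : ℤ), ?_⟩
    rw [zpow_sub, zpow_natCast, zpow_natCast]
    exact mul_comm _ _
  rcases aux_zpow_u hu2 α with hα | hα
  · -- w τ = σ ^ t₀.val * τ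
    have hW0 : w τ = σ ^ (t₀.val) * τ := by rw [hW, hα, one_mul]
    have sum1 : ∑ t : ZMod p, d (σ ^ (t.val) * τ) = - c τ := by
      have hterm : ∀ t : ZMod p, d (σ ^ (t.val) * τ) = if t = t₀ then - c τ else 0 := by
        intro t
        simp only [hd]
        rw [hwσ (t.val) τ]
        by_cases ht : t = t₀
        · subst ht
          rw [if_pos hW0.symm, if_pos rfl, hcσn]
        · rw [if_neg, if_neg ht]
          intro heq
          rw [hW0] at heq
          exact ht (hpow_inj _ _ (mul_right_cancel heq))
      rw [Finset.sum_congr rfl (fun t _ => hterm t),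
        Finset.sum_ite_eq' univ t₀ (fun _ => - c τ)]
      simp
    have sum2 : ∑ t : ZMod p, d (σ ^ (t.val) * (u * τ)) = 0 := by
      refine Finset.sum_eq_zero fun t _ => ?_
      simp only [hd]
      rw [hwσ (t.val) (u * τ), hwu τ]
      rw [if_neg]
      intro heq
      rw [hW0] at heq
      have h2 : (σ ^ (t.val) * u) * τ = σ ^ (t₀.val) * τ := by
        rw [mul_assoc]; exact heq
      have h3 : σ ^ (t.val) * u = σ ^ (t₀.val) := mul_right_cancel h2
      have h4 : u = (σ ^ (t.val))⁻¹ * σ ^ (t₀.val) := by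
        rw [← h3, ← mul_assoc, inv_mul_cancel, one_mul]
      exact huσ (h4 ▸ hmemz t t₀)
    rw [sum1, sum2]
    simp only [hc]
    try ring
  · -- w τ = σ ^ t₀.val * (u * τ)
    have hW1 : w τ = σ ^ (t₀.val) * (u * τ) := by
      rw [hW, hα, mul_left_comm]
    have sum1 : ∑ t : ZMod p, d (σ ^ (t.val) * τ) = 0 := by
      refine Finset.sum_eq_zero fun t _ => ?_
      simp only [hd]
      rw [hwσ (t.val) τ]
      rw [if_neg]
      intro heq
      rw [hW1] at heq
      have h2 : σ ^ (t.val) * τ = (σ ^ (t₀.val) * u) * τ := by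
        rw [mul_assoc]; exact heq
      have h3 : σ ^ (t.val) = σ ^ (t₀.val) * u := mul_right_cancel h2
      have h4 : u = (σ ^ (t₀.val))⁻¹ * σ ^ (t.val) := by
        rw [h3, ← mul_assoc, inv_mul_cancel, one_mul]
      exact huσ (h4 ▸ hmemz t₀ t)
    have sum2 : ∑ t : ZMod p, d (σ ^ (t.val) * (u * τ)) = c τ := by
      have hterm : ∀ t : ZMod p, d (σ ^ (t.val) * (u * τ)) = if t = t₀ then c τ else 0 := by
        intro t
        simp only [hd]
        rw [hwσ (t.val) (u * τ), hwu τ]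
        by_cases ht : t = t₀
        · subst ht
          rw [if_pos hW1.symm, if_pos rfl, hcσn, hcu, neg_neg]
        · rw [if_neg, if_neg ht]
          intro heq
          rw [hW1] at heq
          exact ht (hpow_inj _ _ (mul_right_cancel heq))
      rw [Finset.sum_congr rfl (fun t _ => hterm t),
        Finset.sum_ite_eq' univ t₀ (fun _ => c τ)]
      simp
    rw [sum1, sum2]
    simp only [hc]
    try ring
end Comb

section Dim
variable {G : Type*} [CommGroup G] [Fintype G] [DecidableEq G]

lemma aux_zpow_u' {u : G} (hu2 : u * u = 1) (α : ℤ) :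
    u ^ α = 1 ∨ u ^ α = u := by
  rcases Int.even_or_odd α with ⟨k, hk⟩ | ⟨k, hk⟩
  · left; rw [hk, zpow_add, ← mul_zpow, hu2, one_zpow]
  · right; rw [hk, zpow_add, zpow_one, zpow_mul, zpow_two, hu2, one_zpow, one_mul]

lemma aux_ker_eq {p : ℕ} (hp : p.Prime) {n : ℕ} (hG : Fintype.card G = 2 * n)
    {u : G} (hu1 : u ≠ 1) (hu2 : u * u = 1)
    (ψ : (G → ZMod p) →ₗ[ZMod p] (Fin n → ZMod p))
    (hsurj : Function.Surjective ψ)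
    (hK : ∀ a : G → ZMod p, (∀ τ, a (u * τ) = a τ) → ψ a = 0) :
    ∀ a : G → ZMod p, ψ a = 0 → ∀ τ, a (u * τ) = a τ := by
  haveI := Fact.mk hp
  classical
  let K : Submodule (ZMod p) (G → ZMod p) :=
    { carrier := {a | ∀ τ, a (u * τ) = a τ}
      add_mem' := fun {x y} hx hy τ => by
        simp only [Pi.add_apply, hx τ, hy τ]
      zero_mem' := fun τ => rfl
      smul_mem' := fun c {x} hx τ => by simp only [Pi.smul_apply, hx τ] }
  set H : Subgroup G := Subgroup.zpowers u with hH
  letI : Fintype (G ⧸ H) := Fintype.ofFinite _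
  have hu_ord : orderOf u = 2 := orderOf_eq_prime (by rw [pow_two]; exact hu2) hu1
  have hcardH : Nat.card H = 2 := by rw [Nat.card_zpowers, hu_ord]
  have hcardQ : Fintype.card (G ⧸ H) = n := by
    have h := Subgroup.card_eq_card_quotient_mul_card_subgroup H
    rw [hcardH, Nat.card_eq_fintype_card, Nat.card_eq_fintype_card, hG] at h
    omega
  let Φ : ((G ⧸ H) → ZMod p) →ₗ[ZMod p] (G → ZMod p) :=
    { toFun := fun f τ => f (QuotientGroup.mk τ)
      map_add' := fun f g => rfl
      map_smul' := fun c f => rfl }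
  have hΦinj : Function.Injective Φ := by
    intro f g h
    funext q
    obtain ⟨τ, rfl⟩ := QuotientGroup.mk_surjective q
    exact congrFun h τ
  have huinv : u⁻¹ = u := by
    rw [inv_eq_iff_mul_eq_one, hu2]
  have hrange : LinearMap.range Φ = K := by
    ext a
    constructor
    · rintro ⟨f, rfl⟩
      intro τ
      show f (QuotientGroup.mk (u * τ)) = f (QuotientGroup.mk τ)
      congr 1
      rw [QuotientGroup.eq]
      have hcomp : (u * τ)⁻¹ * τ = u⁻¹ := by
        rw [mul_inv_rev, mul_assoc, mul_comm τ⁻¹, mul_assoc, mul_inv_cancel, mul_one]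
      rw [hcomp]
      exact H.inv_mem (Subgroup.mem_zpowers u)
    · intro ha
      refine ⟨fun q => a (Quotient.out q), ?_⟩
      funext τ
      show a (Quotient.out (QuotientGroup.mk τ)) = a τ
      have hout := Quotient.out_eq (QuotientGroup.mk (s := H) τ)
      have hmem := (QuotientGroup.eq (s := H)).1 hout
      obtain ⟨z, hz⟩ := Subgroup.mem_zpowers_iff.1 hmem
      rcases aux_zpow_u' hu2 z with h1 | h1
      · rw [h1] at hz
        have h2 : Quotient.out (QuotientGroup.mk (s := H) τ) = τ :=
          inv_mul_eq_one.1 hz.symm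
        rw [h2]
      · rw [h1] at hz
        have h2 : Quotient.out (QuotientGroup.mk (s := H) τ) * u = τ := by
          rw [hz, mul_inv_cancel_left]
        have h3 : u * τ = Quotient.out (QuotientGroup.mk (s := H) τ) := by
          conv_lhs => rw [← h2]
          rw [mul_left_comm, hu2, mul_one]
        rw [← h3, ha τ]
  have h1 : Module.finrank (ZMod p) ((G ⧸ H) → ZMod p) = n := by
    rw [Module.finrank_pi, hcardQ]
  have hKrank : Module.finrank (ZMod p) K = n := by
    rw [← hrange, LinearMap.finrank_range_of_inj hΦinj, h1]
  have hVrank : Module.finrank (ZMod p) (G → ZMod p) = 2 * n := by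
    rw [Module.finrank_pi, hG]
  have hkerK : K ≤ LinearMap.ker ψ := fun a ha => hK a ha
  have hkerrank : Module.finrank (ZMod p) (LinearMap.ker ψ) = n := by
    have h := LinearMap.finrank_range_add_finrank_ker ψ
    rw [hVrank, LinearMap.range_eq_top.2 hsurj, finrank_top, Module.finrank_pi] at h
    simp only [Fintype.card_fin] at h
    omega
  have hKeq : K = LinearMap.ker ψ :=
    Submodule.eq_of_le_of_finrank_eq hkerK (by rw [hKrank, hkerrank])
  intro a ha
  have : a ∈ K := by rw [hKeq]; exact ha
  exact this

end Dim

section Span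
variable {G : Type*} [CommGroup G] [Fintype G] [DecidableEq G]
variable {L : Type*} [AddCommGroup L]

lemma aux_span_unpack (ρ : G →* (L ≃ₗ[ℤ] L)) (m : ℕ) (ep : L)
    (hspan : Submodule.span ℤ
      ((Set.range fun σ : G => ρ σ ep) ∪ (Set.range fun y : L => (m : ℤ) • y)) = ⊤) :
    ∀ x : L, ∃ (a : G → ℤ) (y : L), x = (∑ τ : G, a τ • ρ τ ep) + (m : ℤ) • y := by
  classical
  let U : Submodule ℤ L :=
    { carrier := {x | ∃ (a : G → ℤ) (y : L), x = (∑ τ : G, a τ • ρ τ ep) + (m : ℤ) • y}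
      add_mem' := by
        rintro x1 x2 ⟨a1, y1, rfl⟩ ⟨a2, y2, rfl⟩
        refine ⟨a1 + a2, y1 + y2, ?_⟩
        simp only [Pi.add_apply, add_smul, smul_add, Finset.sum_add_distrib]
        abel
      zero_mem' := ⟨0, 0, by simp⟩
      smul_mem' := by
        rintro c x ⟨a, y, rfl⟩
        refine ⟨c • a, c • y, ?_⟩
        simp only [smul_add, Finset.smul_sum, Pi.smul_apply, smul_smul, smul_eq_mul]
        rw [mul_comm c (m : ℤ)]
      }
  have hle : Submodule.span ℤ
      ((Set.range fun σ : G => ρ σ ep) ∪ (Set.range fun y : L => (m : ℤ) • y)) ≤ U := by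
    rw [Submodule.span_le]
    rintro z (⟨τ₀, rfl⟩ | ⟨y₀, rfl⟩)
    · have hsum : ∑ τ : G, ((Pi.single τ₀ 1 : G → ℤ)) τ • ρ τ ep = ρ τ₀ ep := by
        rw [Finset.sum_eq_single τ₀]
        · simp
        · intro τ _ h; simp [Pi.single_apply, h]
        · intro h; exact absurd (Finset.mem_univ τ₀) h
      exact ⟨Pi.single τ₀ 1, 0, by rw [hsum, smul_zero, add_zero]⟩
    · exact ⟨0, y₀, by simp⟩
  intro x
  have : x ∈ U := hle (by rw [hspan]; exact Submodule.mem_top)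
  exact this

end Span

section Key
variable {G : Type*} [CommGroup G] [Fintype G] [DecidableEq G]
variable {L : Type*} [AddCommGroup L]

lemma aux_key (u : G) (hu1 : u ≠ 1) (hu2 : u * u = 1)
    (B : L →ₗ[ℤ] L →ₗ[ℤ] ℤ)
    (ρ : G →* (L ≃ₗ[ℤ] L))
    (hρB : ∀ (σ : G) (x y : L), B (ρ σ x) (ρ σ y) = B x y)
    (hρu : ∀ x : L, ρ u x = -x)
    (hrank : Module.finrank ℤ L = Fintype.card G / 2)
    (hbij : Function.Bijective fun x : L => B x)
    (hgen : ∀ m : ℕ, 0 < m → ∃ ep : L, Submodule.span ℤ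
      ((Set.range fun σ : G => ρ σ ep) ∪ (Set.range fun y : L => (m : ℤ) • y)) = ⊤)
    (e : L) (he : B e e = 1)
    (σ : G) {p : ℕ} (hp : p.Prime) (hord : orderOf σ = p)
    (huσ : u ∉ Subgroup.zpowers σ) (hfix : ρ σ e = e) : False := by
  classical
  haveI := Fact.mk hp
  haveI : NeZero p := ⟨hp.ne_zero⟩
  -- group cardinality
  have hu_ord : orderOf u = 2 := orderOf_eq_prime (by rw [pow_two]; exact hu2) hu1
  have h2dvd : 2 ∣ Fintype.card G := hu_ord ▸ orderOf_dvd_card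
  set n := Fintype.card G / 2 with hn
  have hG : Fintype.card G = 2 * n := by rw [hn]; exact (Nat.mul_div_cancel' h2dvd).symm
  have hn0 : n ≠ 0 := by
    have : 0 < Fintype.card G := Fintype.card_pos
    omega
  obtain ⟨b⟩ := aux_basis B hbij hn0 hrank
  -- composition lemma for ρ
  have happly : ∀ (g₁ g₂ : G) (w : L), ρ (g₁ * g₂) w = ρ g₁ (ρ g₂ w) := by
    intro g₁ g₂ w; rw [map_mul]; rfl
  -- the reduction map
  let rh : L →+ (Fin n → ZMod p) :=
    { toFun := fun x i => ((b.repr x i : ℤ) : ZMod p)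
      map_zero' := by funext i; simp
      map_add' := by intro x y; funext i; simp }
  have r_smul : ∀ (c : ℤ) (x : L), rh (c • x) = (c : ZMod p) • rh x := by
    intro c x; funext i
    show (((b.repr (c • x)) i : ℤ) : ZMod p) = (c : ZMod p) * ((b.repr x i : ℤ) : ZMod p)
    rw [map_smul, Finsupp.smul_apply, smul_eq_mul, Int.cast_mul]
  have r_eq_zero : ∀ x : L, rh x = 0 → ∃ y : L, x = (p : ℤ) • y := by
    intro x hx
    have hdvd : ∀ i, (p : ℤ) ∣ b.repr x i := by
      intro i
      have := congrFun hx i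
      exact (ZMod.intCast_zmod_eq_zero_iff_dvd _ p).1 this
    refine ⟨∑ i, (b.repr x i / p) • b i, ?_⟩
    conv_lhs => rw [← b.sum_repr x]
    rw [Finset.smul_sum]
    refine Finset.sum_congr rfl fun i _ => ?_
    rw [smul_smul, Int.mul_ediv_cancel' (hdvd i)]
  have r_surj : ∀ wv : Fin n → ZMod p, ∃ x : L, rh x = wv := by
    intro wv
    refine ⟨∑ j, ((wv j).val : ℤ) • b j, ?_⟩
    funext i
    have hrep : b.repr (∑ j, ((wv j).val : ℤ) • b j) i = ((wv i).val : ℤ) := by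
      rw [map_sum]
      rw [Finsupp.finset_sum_apply]
      rw [Finset.sum_eq_single i]
      · simp [Module.Basis.repr_self]
      · intro j _ hj
        simp [Module.Basis.repr_self, Finsupp.single_apply, hj]
      · intro h; exact absurd (Finset.mem_univ i) h
    show ((b.repr _ i : ℤ) : ZMod p) = wv i
    rw [hrep]
    push_cast
    exact ZMod.natCast_rightInverse (wv i)
  -- the generator mod p
  obtain ⟨ep, hspan⟩ := hgen p hp.pos
  set φf : (G → ℤ) → L := fun a => ∑ τ : G, a τ • ρ τ ep with hφf
  have hφ_unpack := aux_span_unpack ρ p ep hspan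
  have hφ_sub : ∀ a1 a2 : G → ℤ, φf (a1 - a2) = φf a1 - φf a2 := by
    intro a1 a2
    simp only [hφf, Pi.sub_apply, sub_smul, Finset.sum_sub_distrib]
  -- psi
  set ψ : (G → ZMod p) →ₗ[ZMod p] (Fin n → ZMod p) :=
    { toFun := fun a => ∑ τ : G, a τ • rh (ρ τ ep)
      map_add' := by
        intro a1 a2
        simp [add_smul, Finset.sum_add_distrib]
      map_smul' := by
        intro c a
        rw [RingHom.id_apply, Finset.smul_sum]
        refine Finset.sum_congr rfl fun τ _ => ?_
        rw [Pi.smul_apply, smul_smul, smul_eq_mul] } with hψdef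
  have hcompat : ∀ a : G → ℤ, rh (φf a) = ψ (fun τ => ((a τ : ℤ) : ZMod p)) := by
    intro a
    show rh (∑ τ : G, a τ • ρ τ ep) = _
    rw [map_sum]
    refine Finset.sum_congr rfl fun τ _ => ?_
    exact r_smul (a τ) (ρ τ ep)
  have hψK : ∀ k : G → ZMod p, (∀ τ, k (u * τ) = k τ) → ψ k = 0 := by
    intro k hk
    show ∑ τ : G, k τ • rh (ρ τ ep) = 0
    refine Finset.sum_involution (fun τ _ => u * τ) ?_ ?_ (fun τ _ => Finset.mem_univ _) ?_
    · intro τ _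
      have h1 : ρ (u * τ) ep = - ρ τ ep := by rw [happly, hρu]
      rw [hk τ, h1, map_neg, smul_neg, add_neg_cancel]
    · intro τ _ _
      rw [Ne, mul_eq_right]
      exact hu1
    · intro τ _
      show u * (u * τ) = τ
      rw [← mul_assoc, hu2, one_mul]
  have hψsurj : Function.Surjective ψ := by
    intro wv
    obtain ⟨x, rfl⟩ := r_surj wv
    obtain ⟨a, y, hxy⟩ := hφ_unpack x
    refine ⟨fun τ => ((a τ : ℤ) : ZMod p), ?_⟩
    rw [← hcompat, hxy, map_add]
    have : rh ((p : ℤ) • y) = 0 := by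
      rw [r_smul]
      simp
    rw [this, add_zero]
  -- decompose e
  obtain ⟨a, y, hey0⟩ := hφ_unpack e
  have hey : e = φf a + (p : ℤ) • y := hey0
  have hTσ : φf (fun τ => a (σ⁻¹ * τ)) = ρ σ (φf a) := by
    show ∑ τ : G, a (σ⁻¹ * τ) • ρ τ ep = ρ σ (∑ τ : G, a τ • ρ τ ep)
    rw [map_sum]
    simp only [map_smul, ← happly]
    refine Fintype.sum_equiv (Equiv.mulLeft σ⁻¹) _ _ fun τ => ?_
    show a (σ⁻¹ * τ) • ρ τ ep = a (σ⁻¹ * τ) • ρ (σ * (σ⁻¹ * τ)) ep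
    rw [mul_inv_cancel_left]
  -- the function τ ↦ a (σ⁻¹ τ) - a τ maps into pL under φf
  have hker0 : rh (φf (fun τ => a (σ⁻¹ * τ) - a τ)) = 0 := by
    have h1 : φf (fun τ => a (σ⁻¹ * τ) - a τ)
        = ((p : ℤ) • y) - ((p : ℤ) • ρ σ y) := by
      have h2 : φf ((fun τ => a (σ⁻¹ * τ)) - a) = φf (fun τ => a (σ⁻¹ * τ)) - φf a :=
        hφ_sub _ _
      have h3 : φf a = e - (p : ℤ) • y := by rw [hey]; abel
      have h4 : ρ σ (φf a) = e - (p : ℤ) • ρ σ y := by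
        rw [h3, map_sub, map_smul, hfix]
      calc φf (fun τ => a (σ⁻¹ * τ) - a τ)
          = φf (fun τ => a (σ⁻¹ * τ)) - φf a := h2
        _ = (e - (p : ℤ) • ρ σ y) - (e - (p : ℤ) • y) := by rw [hTσ, h4, h3]
        _ = ((p : ℤ) • y) - ((p : ℤ) • ρ σ y) := by abel
    rw [h1, map_sub, r_smul, r_smul]
    simp
  -- hence it is u-symmetric mod p
  have hsc := aux_ker_eq hp hG hu1 hu2 ψ hψsurj hψK
    (fun τ => (((a (σ⁻¹ * τ) - a τ : ℤ)) : ZMod p))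
    (by rw [← hcompat]; exact hker0)
  -- apply the combinatorial lemma
  set abar : G → ZMod p := fun τ => ((a τ : ℤ) : ZMod p) with habar
  have hcond : ∀ τ, abar (σ⁻¹ * (u * τ)) - abar (u * τ) = abar (σ⁻¹ * τ) - abar τ := by
    intro τ
    have := hsc τ
    push_cast at this
    exact this
  obtain ⟨dbar, hdsym⟩ := aux_comb hu1 hu2 hord huσ abar hcond
  set d : G → ℤ := fun τ => ((dbar τ).val : ℤ) with hd
  have hdcast : ∀ τ, ((d τ : ℤ) : ZMod p) = dbar τ := by
    intro τ
    show (((dbar τ).val : ℤ) : ZMod p) = dbar τ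
    push_cast
    exact ZMod.natCast_rightInverse (dbar τ)
  set k : G → ℤ := fun τ => a τ - ∑ t : ZMod p, d (σ ^ t.val * τ) with hk
  have hksym : ∀ τ, ((k (u * τ) : ℤ) : ZMod p) = ((k τ : ℤ) : ZMod p) := by
    intro τ
    show ((a (u * τ) - ∑ t : ZMod p, d (σ ^ t.val * (u * τ)) : ℤ) : ZMod p)
      = ((a τ - ∑ t : ZMod p, d (σ ^ t.val * τ) : ℤ) : ZMod p)
    push_cast
    simp only [hdcast]
    have := hdsym τ
    simpa [habar] using this
  -- φf a = φf k + Π x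
  set x : L := φf d with hx
  set Px : L := ∑ t : ZMod p, ρ ((σ ^ t.val)⁻¹) x with hPx
  have hNφ : φf (fun τ => ∑ t : ZMod p, d (σ ^ t.val * τ)) = Px := by
    show ∑ τ : G, (∑ t : ZMod p, d (σ ^ t.val * τ)) • ρ τ ep = _
    have hswap : ∑ τ : G, (∑ t : ZMod p, d (σ ^ t.val * τ)) • ρ τ ep
        = ∑ t : ZMod p, ∑ τ : G, d (σ ^ t.val * τ) • ρ τ ep := by
      rw [Finset.sum_congr rfl (fun τ _ => Finset.sum_smul), Finset.sum_comm]
    rw [hswap, hPx]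
    refine Finset.sum_congr rfl fun t _ => ?_
    rw [hx]
    show ∑ τ : G, d (σ ^ t.val * τ) • ρ τ ep = ρ ((σ ^ t.val)⁻¹) (∑ τ : G, d τ • ρ τ ep)
    rw [map_sum]
    simp only [map_smul, ← happly]
    refine Fintype.sum_equiv (Equiv.mulLeft (σ ^ t.val)) _ _ fun τ => ?_
    show d (σ ^ t.val * τ) • ρ τ ep = d (σ ^ t.val * τ) • ρ ((σ ^ t.val)⁻¹ * (σ ^ t.val * τ)) ep
    rw [inv_mul_cancel_left]
  have hak : a = fun τ => k τ + ∑ t : ZMod p, d (σ ^ t.val * τ) := by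
    funext τ
    simp [hk]
  have hφa : φf a = φf k + Px := by
    rw [← hNφ]
    conv_lhs => rw [hak]
    show ∑ τ : G, (k τ + ∑ t : ZMod p, d (σ ^ t.val * τ)) • ρ τ ep = _
    simp only [add_smul, Finset.sum_add_distrib]
    rfl
  have hφk0 : rh (φf k) = 0 := by
    rw [hcompat]
    exact hψK _ hksym
  have hre : rh (e - Px) = 0 := by
    rw [map_sub]
    have h1 : rh e = rh Px := by
      rw [hey, map_add, hφa, map_add, hφk0, zero_add]
      have h2 : rh ((p : ℤ) • y) = 0 := by rw [r_smul]; simp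
      rw [h2, add_zero]
    rw [h1, sub_self]
  obtain ⟨z, hz⟩ := r_eq_zero _ hre
  have hez : e = Px + (p : ℤ) • z := by
    have := hz
    rw [sub_eq_iff_eq_add] at this
    rw [this]; abel
  -- the Gram computation
  set F : ZMod p → ℤ := fun q => B x (ρ (σ ^ q.val) x) with hF
  have hexp : ∀ s t : ZMod p, σ ^ s.val * (σ ^ t.val)⁻¹ = σ ^ ((s - t).val) := by
    intro s t
    have h1 : σ ^ (s.val) * (σ ^ (t.val))⁻¹ = σ ^ ((s.val : ℤ) - (t.val : ℤ)) := by
      rw [zpow_sub, zpow_natCast, zpow_natCast]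
    have h2 : (((s.val : ℤ) - (t.val : ℤ) : ℤ) : ZMod p) = s - t := by
      push_cast
      rw [ZMod.natCast_rightInverse s, ZMod.natCast_rightInverse t]
    rw [h1, aux_zpow_val hord, h2]
  have hterm : ∀ s t : ZMod p,
      B (ρ ((σ ^ s.val)⁻¹) x) (ρ ((σ ^ t.val)⁻¹) x) = F (s - t) := by
    intro s t
    have h1 := hρB (σ ^ s.val) (ρ ((σ ^ s.val)⁻¹) x) (ρ ((σ ^ t.val)⁻¹) x)
    rw [← happly, ← happly, mul_inv_cancel] at h1
    have h2 : ρ (1 : G) x = x := by rw [map_one]; rfl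
    rw [h2, hexp s t] at h1
    rw [← h1, hF]
  have hPP : B Px Px = (p : ℤ) * ∑ q : ZMod p, F q := by
    have h1 : B Px Px
        = ∑ s : ZMod p, ∑ t : ZMod p, B (ρ ((σ ^ s.val)⁻¹) x) (ρ ((σ ^ t.val)⁻¹) x) := by
      have hA : (B (∑ s : ZMod p, ρ ((σ ^ s.val)⁻¹) x))
          = ∑ s : ZMod p, B (ρ ((σ ^ s.val)⁻¹) x) := map_sum B _ _
      rw [hPx, hA, LinearMap.sum_apply]
      exact Finset.sum_congr rfl fun s _ => map_sum _ _ _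
    rw [h1]
    have h2 : ∀ s : ZMod p, ∑ t : ZMod p, B (ρ ((σ ^ s.val)⁻¹) x) (ρ ((σ ^ t.val)⁻¹) x)
        = ∑ q : ZMod p, F q := by
      intro s
      rw [Finset.sum_congr rfl fun t _ => hterm s t]
      exact Fintype.sum_equiv (Equiv.subLeft s) _ _ fun t => rfl
    rw [Finset.sum_congr rfl fun s _ => h2 s, Finset.sum_const, Finset.card_univ, ZMod.card,
      nsmul_eq_mul]
  have hBee : (1 : ℤ) = B Px Px + (p : ℤ) * (B Px z + B z Px + (p : ℤ) * B z z) := by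
    calc (1 : ℤ) = B e e := he.symm
      _ = B (Px + (p : ℤ) • z) (Px + (p : ℤ) • z) := by rw [← hez]
      _ = B Px Px + (p : ℤ) * (B Px z + B z Px + (p : ℤ) * B z z) := by
          simp only [map_add, map_smul, LinearMap.add_apply, LinearMap.smul_apply, smul_eq_mul]
          ring
  have hdvd : (p : ℤ) ∣ 1 := by
    refine ⟨(∑ q : ZMod p, F q) + (B Px z + B z Px + (p : ℤ) * B z z), ?_⟩
    rw [hBee, hPP]
    ring
  have hle := Int.le_of_dvd one_pos hdvd
  have h2p := hp.two_le
  omega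
end Key

/-- A `G`-lattice `(L, B, ρ)` is *invertible* if it has rank `#G/2`, is
unimodular, and for every `m > 0` there is `e_m ∈ L` whose `G`-orbit generates
`L/mL` as an abelian group. -/
def GInvertible (G : Type*) [CommGroup G] [Fintype G] (u : G) (L : Type*)
    [AddCommGroup L] (B : L →ₗ[ℤ] L →ₗ[ℤ] ℤ) (ρ : G →* (L ≃ₗ[ℤ] L)) : Prop :=
  (Module.finrank ℤ L = Fintype.card G / 2) ∧
  (Function.Bijective fun x : L => B x) ∧
  (∀ m : ℕ, 0 < m → ∃ e : L,
    Submodule.span ℤ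
      ((Set.range fun σ : G => ρ σ e) ∪ (Set.range fun y : L => (m : ℤ) • y)) = ⊤)

/-- If `e` is a short vector of an invertible `G`-lattice, then its stabilizer
in `G` is trivial and `⟨e, σe⟩` is `1, -1, 0` according as `σ = 1`, `σ = u`, or
otherwise. -/
theorem stmt_14 (G : Type*) [CommGroup G] [Fintype G] [DecidableEq G]
    (u : G) (hu1 : u ≠ 1) (hu2 : u * u = 1)
    (L : Type*) [AddCommGroup L]
    (B : L →ₗ[ℤ] L →ₗ[ℤ] ℤ)
    (hsymm : ∀ x y : L, B x y = B y x)
    (hpos : ∀ x : L, x ≠ 0 → 0 < B x x)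
    (ρ : G →* (L ≃ₗ[ℤ] L))
    (hρB : ∀ (σ : G) (x y : L), B (ρ σ x) (ρ σ y) = B x y)
    (hρu : ∀ x : L, ρ u x = -x)
    (hinv : GInvertible G u L B ρ)
    (e : L) (he : B e e = 1) :
    (∀ σ : G, ρ σ e = e → σ = 1) ∧
    (∀ σ : G, B e (ρ σ e) = if σ = 1 then 1 else if σ = u then -1 else 0) := by
  obtain ⟨hrank, hbij, hgen⟩ := hinv
  have happly : ∀ (g₁ g₂ : G) (w : L), ρ (g₁ * g₂) w = ρ g₁ (ρ g₂ w) := by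
    intro g₁ g₂ w; rw [map_mul]; rfl
  have hstab : ∀ σ : G, ρ σ e = e → σ = 1 := by
    intro σ hσ
    by_contra hσ1
    have hne : orderOf σ ≠ 1 := by rwa [Ne, orderOf_eq_one_iff]
    set q := orderOf σ with hq
    have hq0 : q ≠ 0 := (orderOf_pos σ).ne'
    set p := q.minFac with hpdef
    have hp : p.Prime := Nat.minFac_prime hne
    haveI : NeZero p := ⟨hp.ne_zero⟩
    set σ' := σ ^ (q / p) with hσ'
    have hdvd : q / p ∣ q := Nat.div_dvd_of_dvd (Nat.minFac_dvd q)
    have hordσ' : orderOf σ' = p := by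
      rw [hσ', orderOf_pow, ← hq, Nat.gcd_eq_right hdvd]
      exact Nat.div_div_self (Nat.minFac_dvd q) hq0
    have hfixpow : ∀ m : ℕ, ρ (σ ^ m) e = e := by
      intro m
      induction m with
      | zero => rw [pow_zero, map_one]; rfl
      | succ k ih => rw [pow_succ, happly, hσ, ih]
    have hfixσ' : ρ σ' e = e := hfixpow _
    have hzp : ∀ g ∈ Subgroup.zpowers σ', ρ g e = e := by
      intro g hg
      obtain ⟨z, hz⟩ := Subgroup.mem_zpowers_iff.1 hg
      rw [← hz, aux_zpow_val hordσ' z, hσ', ← pow_mul]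
      exact hfixpow _
    have huz : u ∉ Subgroup.zpowers σ' := by
      intro hmem
      have h3 := hzp u hmem
      rw [hρu e] at h3
      have h4 : B e (-e) = B e e := by rw [h3]
      rw [map_neg, he] at h4
      omega
    exact aux_key u hu1 hu2 B ρ hρB hρu hrank hbij hgen e he σ' hp hordσ' huz hfixσ'
  refine ⟨hstab, fun σ => ?_⟩
  have h1 : B (ρ σ e) (ρ σ e) = 1 := by rw [hρB]; exact he
  by_cases hσ1 : σ = 1
  · subst hσ1
    have h2 : ρ (1 : G) e = e := by rw [map_one]; rfl
    rw [if_pos rfl, h2, he]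
  · rw [if_neg hσ1]
    by_cases hσu : σ = u
    · subst hσu
      rw [if_pos rfl, hρu e, map_neg, he]
    · rw [if_neg hσu]
      obtain ⟨hlo, hhi⟩ := aux_bound B hsymm hpos he h1
      have hne1 : B e (ρ σ e) ≠ 1 := by
        intro h
        exact hσ1 (hstab σ (aux_eq_of_inner_one B hsymm hpos he h1 h).symm)
      have hnen : B e (ρ σ e) ≠ -1 := by
        intro h
        have h2 : B e (-(ρ σ e)) = 1 := by rw [map_neg, h]; ring
        have h3 : B (-(ρ σ e)) (-(ρ σ e)) = 1 := by
          simp [h1]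
        have h4 : e = -(ρ σ e) := aux_eq_of_inner_one B hsymm hpos he h3 h2
        have h5 : ρ (u * σ) e = e := by
          rw [happly, hρu]
          exact h4.symm
        have h6 := hstab _ h5
        have h7 : u⁻¹ = σ := inv_eq_of_mul_eq_one_right h6
        have h8 : u⁻¹ = u := inv_eq_of_mul_eq_one_right hu2
        exact hσu (h7.symm.trans h8)
      omega
end

section
/- Let $L$ be an invertible $G$-lattice and $e \in L$ with $\langle e, e \rangle = 1$. Then $\{\sigma e : \sigma \in G\}$ generates $L$ as an abelian group, and the map $\sigma \mapsto \sigma e$ is a bijection from $G$ to the set of vectors of length 1 in $L$. -/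
lemma aux_orth {L : Type*} [AddCommGroup L] (B : L →ₗ[ℤ] L →ₗ[ℤ] ℤ)
    (hsymm : ∀ x y : L, B x y = B y x)
    (hpos : ∀ x : L, x ≠ 0 → 0 < B x x)
    (v w : L) (hv : B v v = 1) (hw : B w w = 1)
    (h1 : v ≠ w) (h2 : v ≠ -w) : B v w = 0 := by
  set a : ℤ := B v w with ha
  have hwv : B w v = a := by rw [hsymm w v, ← ha]
  have hx : B (v - a • w) (v - a • w) = 1 - a ^ 2 := by
    simp [map_sub, map_smul, hv, hw, hwv, ← ha]
    ring
  have hsq : a ^ 2 ≤ 1 := by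
    by_contra h
    push_neg at h
    rcases eq_or_ne (v - a • w) 0 with h0 | h0
    · have hveq : v = a • w := by rwa [sub_eq_zero] at h0
      have : (1 : ℤ) = a ^ 2 := by
        calc (1 : ℤ) = B v v := hv.symm
        _ = a * (a * B w w) := by rw [hveq]; simp [map_smul]
        _ = a ^ 2 := by rw [hw]; ring
      omega
    · have := hpos _ h0
      rw [hx] at this
      omega
  have hb1 : -1 ≤ a := by nlinarith
  have hb2 : a ≤ 1 := by nlinarith
  interval_cases a
  · exfalso
    apply h2
    have : B (v + w) (v + w) = 0 := by
      simp [map_add, hv, hw, hwv, ← ha]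
    by_contra hne
    have hne' : v + w ≠ 0 := fun hc => hne (by rw [← sub_neg_eq_add] at hc; rwa [sub_eq_zero] at hc)
    exact absurd this (by have := hpos _ hne'; omega)
  · rfl
  · exfalso
    apply h1
    have : B (v - w) (v - w) = 0 := by
      simp [map_sub, hv, hw, hwv, ← ha]
    by_contra hne
    have hne' : v - w ≠ 0 := fun hc => hne (by rwa [sub_eq_zero] at hc)
    exact absurd this (by have := hpos _ hne'; omega)


lemma aux_basis_s15 {L : Type*} [AddCommGroup L] (B : L →ₗ[ℤ] L →ₗ[ℤ] ℤ)
    (hBinj : ∀ x : L, B x = 0 → x = 0)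
    (n : ℕ) (hn0 : 0 < n) (hrank : Module.finrank ℤ L = n) :
    Module.Finite ℤ L ∧ Module.Free ℤ L := by
  have hlt : Module.rank ℤ L < Cardinal.aleph0 := by
    by_contra h
    push_neg at h
    have : Module.finrank ℤ L = 0 := by
      unfold Module.finrank
      exact Cardinal.toNat_apply_of_aleph0_le h
    omega
  have hrk : Module.rank ℤ L = (n : Cardinal) := by
    rw [← hrank]
    unfold Module.finrank
    exact (Cardinal.cast_toNat_of_lt_aleph0 hlt).symm
  obtain ⟨s, hs, hsli⟩ := exists_set_linearIndependent ℤ L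
  have hsfin : s.Finite := by
    rw [← Set.not_infinite]
    intro hinf
    haveI := hinf.to_subtype
    have h1 := Cardinal.aleph0_le_mk s
    rw [hs, hrk] at h1
    exact (Cardinal.nat_lt_aleph0 n).not_ge h1
  haveI := hsfin.fintype
  have hcard : Fintype.card s = n := by
    have : (Fintype.card s : Cardinal) = (n : Cardinal) := by
      rw [← Cardinal.mk_fintype s, hs, hrk]
    exact_mod_cast this
  obtain ⟨eqv⟩ : Nonempty (Fin n ≃ s) := by
    rw [← Fintype.card_eq, hcard, Fintype.card_fin]
  set v : Fin n → L := fun i => (eqv i : L) with hv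
  have hli : LinearIndependent ℤ v := hsli.comp eqv eqv.injective
  have hmax : ∀ z : L, ∃ c : ℤ, c ≠ 0 ∧ c • z ∈ Submodule.span ℤ (Set.range v) := by
    intro z
    have hnli : ¬ LinearIndependent ℤ (Fin.cons z v : Fin (n+1) → L) := by
      intro hli'
      have h2 := hli'.cardinal_lift_le_rank
      rw [hrk, Cardinal.mk_fin, Cardinal.lift_natCast, Cardinal.lift_natCast,
        Nat.cast_le] at h2
      omega
    rw [Fintype.not_linearIndependent_iff] at hnli
    obtain ⟨c, hc0, i, hci⟩ := hnli
    have hsum : c 0 • z + ∑ i : Fin n, c i.succ • v i = 0 := by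
      rw [← hc0, Fin.sum_univ_succ]
      simp [Fin.cons]
    by_cases h0 : c 0 = 0
    · exfalso
      rw [h0, zero_smul, zero_add] at hsum
      have := linearIndependent_iff'.mp hli Finset.univ (fun i => c i.succ) hsum
      rcases Fin.eq_zero_or_eq_succ i with rfl | ⟨j, rfl⟩
      · exact hci h0
      · exact hci (this j (Finset.mem_univ j))
    · refine ⟨c 0, h0, ?_⟩
      have : c 0 • z = - ∑ i : Fin n, c i.succ • v i := by
        rw [eq_neg_iff_add_eq_zero]; exact hsum
      rw [this]
      exact Submodule.neg_mem _ (Submodule.sum_mem _ fun i _ =>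
        Submodule.smul_mem _ _ (Submodule.subset_span ⟨i, rfl⟩))
  set Φ : L →ₗ[ℤ] (Fin n → ℤ) := LinearMap.pi (fun i => B.flip (v i)) with hΦ
  have hΦinj : Function.Injective Φ := by
    rw [injective_iff_map_eq_zero]
    intro x hx
    apply hBinj
    ext z
    obtain ⟨c, hc, hcz⟩ := hmax z
    have h1 : ∀ i, B x (v i) = 0 := by
      intro i
      have := congrFun hx i
      simpa [hΦ] using this
    have h2 : B x (c • z) = 0 := by
      refine Submodule.span_induction (p := fun y _ => B x y = 0) ?_ ?_ ?_ ?_ hcz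
      · rintro y ⟨i, rfl⟩; exact h1 i
      · simp
      · intro a b _ _ ha hb; rw [map_add, ha, hb, add_zero]
      · intro a y _ hy; rw [map_smul, hy, smul_zero]
    have h3 : c * B x z = 0 := by
      have : B x (c • z) = c * B x z := by simp
      rw [← this, h2]
    rcases mul_eq_zero.mp h3 with h | h
    · exact absurd h hc
    · simpa using h
  haveI hnoeth : IsNoetherian ℤ L := isNoetherian_of_injective Φ hΦinj
  haveI hfin : Module.Finite ℤ L := Module.Finite.of_injective Φ hΦinj
  haveI : NoZeroSMulDivisors ℤ L := by
    constructor
    intro c x hcx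
    by_cases hc : c = 0
    · exact Or.inl hc
    · right
      apply hΦinj
      rw [map_zero]
      have h4 : c • Φ x = 0 := by rw [← map_smul, hcx, map_zero]
      rcases smul_eq_zero.mp h4 with h | h
      · exact absurd h hc
      · exact h
  exact ⟨hfin, Module.free_of_finite_type_torsion_free'⟩


set_option maxHeartbeats 1000000 in
lemma aux_lemA {G : Type*} [CommGroup G] [Fintype G] (u : G) (hu1 : u ≠ 1) (hu2 : u * u = 1)
    {L : Type*} [AddCommGroup L]
    (B : L →ₗ[ℤ] L →ₗ[ℤ] ℤ)
    (ρ : G →* (L ≃ₗ[ℤ] L))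
    (hρB : ∀ (σ : G) (x y : L), B (ρ σ x) (ρ σ y) = B x y)
    (hρu : ∀ x : L, ρ u x = -x)
    (n : ℕ) (hn0 : 0 < n) (hG : Nat.card G = 2 * n)
    (hfin : Module.Finite ℤ L) (hfree : Module.Free ℤ L)
    (hrank : Module.finrank ℤ L = n)
    (q : ℕ) (hq : q.Prime) (g : G) (hgord : orderOf g = q) (hgu : g ≠ u)
    (e' : L) (hsp : Submodule.span ℤ
      ((Set.range fun σ : G => ρ σ e') ∪ (Set.range fun y : L => (q:ℤ) • y)) = ⊤)
    (e : L) (he : B e e = 1) (hge : ρ g e = e) : False := by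
  haveI : Fact q.Prime := ⟨hq⟩
  haveI : NeZero q := ⟨hq.ne_zero⟩
  have hq2 : 2 ≤ q := hq.two_le
  have hordu : orderOf u = 2 := by
    have h1 : u ^ 2 = 1 := by rw [pow_two]; exact hu2
    have := orderOf_eq_prime h1 hu1
    exact this
  -- the submodule qL and quotient
  set Q : Submodule ℤ L := LinearMap.range ((q:ℤ) • (LinearMap.id : L →ₗ[ℤ] L)) with hQ
  have hQmem : ∀ x : L, x ∈ Q ↔ ∃ y : L, (q:ℤ) • y = x := by
    intro x
    constructor
    · rintro ⟨y, hy⟩; exact ⟨y, by simpa using hy⟩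
    · rintro ⟨y, hy⟩; exact ⟨y, by simpa using hy⟩
  set V := L ⧸ Q with hV
  set π : L →ₗ[ℤ] V := Q.mkQ with hπ
  have hπsurj : Function.Surjective π := Submodule.mkQ_surjective Q
  have htors : ∀ v : V, q • v = 0 := by
    intro v
    obtain ⟨x, rfl⟩ := hπsurj v
    rw [← map_nsmul]
    have : (q : ℕ) • x ∈ Q := (hQmem _).mpr ⟨x, by simp [natCast_zsmul]⟩
    rwa [hπ, Submodule.mkQ_apply, Submodule.Quotient.mk_eq_zero]
  haveI : Module (ZMod q) V := AddCommGroup.zmodModule htors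
  -- ℤ-smul on a ZMod q module
  have hzsmul : ∀ (c : ℤ) (v : V), ((c : ZMod q)) • v = c • v := by
    intro c v
    rw [Int.cast_smul_eq_zsmul]
  have hzsmulZ : ∀ (c : ℤ) (a : ZMod q), ((c : ZMod q)) • a = c • a := by
    intro c a
    rw [Int.cast_smul_eq_zsmul]
  -- basis of L
  let b : Module.Basis (Fin n) ℤ L := (Module.finBasis ℤ L).reindex (finCongr hrank)
  -- the coordinate map mod q
  have hcast : ∀ (c : ℤ) (a : ZMod q), (c : ZMod q) * a = c • a := by
    intro c a
    rw [← hzsmulZ c a, smul_eq_mul]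
  let g0 : L →ₗ[ℤ] (Fin n → ZMod q) :=
    { toFun := fun x i => ((b.repr x i : ℤ) : ZMod q)
      map_add' := by intro x y; funext i; simp
      map_smul' := by
        intro c x; funext i
        simp only [map_smul, Finsupp.coe_smul, Pi.smul_apply, smul_eq_mul,
          Int.cast_mul, RingHom.id_apply, Pi.smul_apply]
        rw [hcast] }
  have hg0 : ∀ (x : L) (i : Fin n), g0 x i = ((b.repr x i : ℤ) : ZMod q) := fun _ _ => rfl
  have hker : LinearMap.ker g0 = Q := by
    apply le_antisymm
    · intro x hx
      have hx' : ∀ i, ((b.repr x i : ℤ) : ZMod q) = 0 := by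
        intro i
        have := congrFun (LinearMap.mem_ker.mp hx) i
        simpa [hg0] using this
      have hdvd : ∀ i, (q : ℤ) ∣ b.repr x i := by
        intro i
        exact (ZMod.intCast_zmod_eq_zero_iff_dvd _ _).mp (hx' i)
      rw [hQmem]
      refine ⟨∑ i, (b.repr x i / q) • b i, ?_⟩
      rw [Finset.smul_sum]
      have : ∀ i : Fin n, (q:ℤ) • (b.repr x i / q) • b i = b.repr x i • b i := by
        intro i
        rw [smul_smul, Int.mul_ediv_cancel' (hdvd i)]
      rw [Finset.sum_congr rfl (fun i _ => this i)]
      exact b.sum_repr x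
    · intro x hx
      obtain ⟨y, hy⟩ := (hQmem x).mp hx
      rw [LinearMap.mem_ker]
      funext i
      rw [hg0, ← hy]
      simp [mul_comm]
  have hQle : Q ≤ LinearMap.ker g0 := le_of_eq hker.symm
  let g1 : V →ₗ[ℤ] (Fin n → ZMod q) := Q.liftQ g0 hQle
  have hg1π : ∀ x : L, g1 (π x) = g0 x := by
    intro x; rfl
  have hg1bij : Function.Bijective g1 := by
    constructor
    · rw [← LinearMap.ker_eq_bot]
      exact Submodule.ker_liftQ_eq_bot _ _ _ (le_of_eq hker)
    · intro c
      refine ⟨π (∑ i, ((c i).val : ℤ) • b i), ?_⟩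
      rw [hg1π]
      funext i
      rw [hg0]
      have : b.repr (∑ j, ((c j).val : ℤ) • b j) i = ((c i).val : ℤ) := by
        have := b.repr_sum_self (fun j => ((c j).val : ℤ))
        rw [this]
      rw [this]
      simp [ZMod.natCast_val, ZMod.cast_id]
  -- ZMod q linear version and finrank
  let g2 : V →ₗ[ZMod q] (Fin n → ZMod q) := AddMonoidHom.toZModLinearMap q g1.toAddMonoidHom
  have hg2 : ∀ v, g2 v = g1 v := fun _ => rfl
  have hg2bij : Function.Bijective g2 := hg1bij
  let E : V ≃ₗ[ZMod q] (Fin n → ZMod q) := LinearEquiv.ofBijective g2 hg2bij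
  have hdim : Module.finrank (ZMod q) V = n := by
    rw [LinearEquiv.finrank_eq E, Module.finrank_pi, Fintype.card_fin]
  -- span of the orbit of e' over ZMod q is everything
  have hspanV : Submodule.span (ZMod q) (Set.range fun σ : G => π (ρ σ e')) = ⊤ := by
    rw [eq_top_iff]
    intro v _
    have hv : v ∈ Submodule.restrictScalars ℤ
        (Submodule.span (ZMod q) (Set.range fun σ : G => π (ρ σ e'))) := by
      have h1 : Submodule.map π (Submodule.span ℤ
          ((Set.range fun σ : G => ρ σ e') ∪ (Set.range fun y : L => (q:ℤ) • y))) = ⊤ := by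
        rw [hsp, Submodule.map_top, Submodule.range_mkQ]
      rw [Submodule.map_span] at h1
      have h2 : Submodule.span ℤ (π '' ((Set.range fun σ : G => ρ σ e')
          ∪ (Set.range fun y : L => (q:ℤ) • y))) ≤ Submodule.restrictScalars ℤ
          (Submodule.span (ZMod q) (Set.range fun σ : G => π (ρ σ e'))) := by
        rw [Submodule.span_le]
        rintro w ⟨x, hx, rfl⟩
        rcases hx with ⟨σ, rfl⟩ | ⟨y, rfl⟩
        · exact Submodule.subset_span ⟨σ, rfl⟩
        · have : π ((q:ℤ) • y) = 0 := by
            rw [map_smul]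
            have := htors (π y)
            rw [← this, natCast_zsmul]
          rw [this]
          exact Submodule.zero_mem _
      rw [h1] at h2
      exact h2 trivial
    exact hv
  -- the subgroup P generated by u and g
  set P : Subgroup G := Subgroup.zpowers u ⊔ Subgroup.zpowers g with hP
  have hmem2 : ∀ x : G, x ∈ Subgroup.zpowers u → x = 1 ∨ x = u := by
    rintro x ⟨k, rfl⟩
    show u ^ k = 1 ∨ u ^ k = u
    have h1 := zpow_mod_orderOf u k
    rw [hordu] at h1
    have h2 : k % ((2:ℕ):ℤ) = 0 ∨ k % ((2:ℕ):ℤ) = 1 := by omega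
    rcases h2 with h | h
    · left; rw [← h1, h]; simp
    · right; rw [← h1, h]; simp
  have hmemg : ∀ x : G, x ∈ Subgroup.zpowers g → ∃ k : ℕ, k < q ∧ x = g ^ k := by
    rintro x ⟨k, rfl⟩
    show ∃ k' : ℕ, k' < q ∧ g ^ k = g ^ k'
    have h1 := zpow_mod_orderOf g k
    rw [hgord] at h1
    have h2 : 0 ≤ k % ((q:ℕ):ℤ) := Int.emod_nonneg k (by exact_mod_cast hq.ne_zero)
    have h3 : k % ((q:ℕ):ℤ) < q := Int.emod_lt_of_pos k (by exact_mod_cast hq.pos)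
    refine ⟨(k % ((q:ℕ):ℤ)).toNat, by omega, ?_⟩
    rw [← h1, ← zpow_natCast]
    congr 1
    omega
  have hUG : u ∉ Subgroup.zpowers g := by
    intro hmem
    obtain ⟨k, hk, hku⟩ := hmemg u hmem
    have hk0 : k ≠ 0 := by
      intro h
      rw [h, pow_zero] at hku
      exact hu1 hku
    have h2 : g ^ (2 * k) = 1 := by
      rw [two_mul, pow_add, ← hku]
      exact hu2
    have h3 : q ∣ 2 * k := by
      rw [← hgord]
      exact orderOf_dvd_of_pow_eq_one h2
    rcases (Nat.Prime.dvd_mul hq).mp h3 with h | h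
    · have hq2' : q = 2 := ((Nat.prime_dvd_prime_iff_eq hq Nat.prime_two).mp h)
      have : k = 1 := by omega
      rw [this, pow_one] at hku
      exact hgu hku.symm
    · have := Nat.le_of_dvd (Nat.pos_of_ne_zero hk0) h
      omega
  -- cardinality of P
  have hbijmem : ∀ (a : ZMod 2) (c : ZMod q), u ^ a.val * g ^ c.val ∈ P := by
    intro a c
    exact Subgroup.mul_mem _
      (Subgroup.mem_sup_left (Subgroup.pow_mem _ (Subgroup.mem_zpowers u) _))
      (Subgroup.mem_sup_right (Subgroup.pow_mem _ (Subgroup.mem_zpowers g) _))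
  let bij : ZMod 2 × ZMod q → P := fun ac => ⟨u ^ ac.1.val * g ^ ac.2.val, hbijmem _ _⟩
  have hbij : Function.Bijective bij := by
    constructor
    · rintro ⟨a1, c1⟩ ⟨a2, c2⟩ hinj
      have heq : u ^ a1.val * g ^ c1.val = u ^ a2.val * g ^ c2.val := congrArg Subtype.val hinj
      have hw : u ^ a1.val / u ^ a2.val = g ^ c2.val / g ^ c1.val := by
        rw [div_eq_div_iff_mul_eq_mul]
        rw [mul_comm (g ^ c2.val)]
        exact heq
      have hw1 : u ^ a1.val / u ^ a2.val ∈ Subgroup.zpowers u :=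
        Subgroup.div_mem _ (Subgroup.pow_mem _ (Subgroup.mem_zpowers u) _)
          (Subgroup.pow_mem _ (Subgroup.mem_zpowers u) _)
      have hw2 : u ^ a1.val / u ^ a2.val ∈ Subgroup.zpowers g := by
        rw [hw]
        exact Subgroup.div_mem _ (Subgroup.pow_mem _ (Subgroup.mem_zpowers g) _)
          (Subgroup.pow_mem _ (Subgroup.mem_zpowers g) _)
      have hwone : u ^ a1.val / u ^ a2.val = 1 := by
        rcases hmem2 _ hw1 with h | h
        · exact h
        · exact absurd (h ▸ hw2) hUG
      have hu12 : u ^ a1.val = u ^ a2.val := by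
        rwa [div_eq_one] at hwone
      have hg12 : g ^ c1.val = g ^ c2.val := by
        rw [hwone] at hw
        have := hw.symm
        rw [div_eq_one] at this
        exact this.symm
      have ha : a1 = a2 := by
        have hmod := pow_eq_pow_iff_modEq.mp hu12
        rw [hordu] at hmod
        have h1 : a1.val % 2 = a2.val % 2 := hmod
        have l1 : a1.val < 2 := a1.val_lt
        have l2 : a2.val < 2 := a2.val_lt
        exact ZMod.val_injective _ (by omega)
      have hc : c1 = c2 := by
        have hmod := pow_eq_pow_iff_modEq.mp hg12
        rw [hgord] at hmod
        have h1 : c1.val % q = c2.val % q := hmod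
        rw [Nat.mod_eq_of_lt c1.val_lt, Nat.mod_eq_of_lt c2.val_lt] at h1
        exact ZMod.val_injective _ h1
      exact Prod.ext ha hc
    · rintro ⟨p, hp⟩
      rw [hP, Subgroup.mem_sup] at hp
      obtain ⟨y, hy, z, hz, hyz⟩ := hp
      obtain ⟨k, hk, hzk⟩ := hmemg z hz
      rcases hmem2 y hy with h | h
      · refine ⟨⟨(0 : ZMod 2), (k : ZMod q)⟩, ?_⟩
        apply Subtype.ext
        show u ^ (0 : ZMod 2).val * g ^ ((k : ZMod q)).val = p
        rw [ZMod.val_zero, pow_zero, one_mul, ZMod.val_cast_of_lt hk]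
        rw [← hyz, h, hzk, one_mul]
      · refine ⟨⟨(1 : ZMod 2), (k : ZMod q)⟩, ?_⟩
        apply Subtype.ext
        show u ^ (1 : ZMod 2).val * g ^ ((k : ZMod q)).val = p
        rw [ZMod.val_one, pow_one, ZMod.val_cast_of_lt hk]
        rw [← hyz, h, hzk]
  have hcardP : Nat.card P = 2 * q := by
    rw [← Nat.card_eq_of_bijective bij hbij]
    simp [Nat.card_prod, Nat.card_zmod]
  -- the quotient C and its cardinality
  set C := G ⧸ P with hC
  haveI : Fintype C := Fintype.ofFinite C
  have hcardC : q * Nat.card C = n := by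
    have h1 := Subgroup.card_eq_card_quotient_mul_card_subgroup P
    rw [hG, hcardP] at h1
    have h2 : 2 * n = 2 * (q * Nat.card C) := by rw [h1]; ring
    omega
  -- the family F indexed by ZMod q × C
  set F : ZMod q × C → V := fun jc => π (ρ (g ^ jc.1.val * jc.2.out) e') with hF
  have hFdef : ∀ (j : ZMod q) (c : C), F (j, c) = π (ρ (g ^ j.val * (Quotient.out c)) e') :=
    fun _ _ => rfl
  have hFspan : ⊤ ≤ Submodule.span (ZMod q) (Set.range F) := by
    rw [← hspanV]
    rw [Submodule.span_le]
    rintro v ⟨σ, rfl⟩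
    set c : C := QuotientGroup.mk σ with hc
    have hout : (QuotientGroup.mk (Quotient.out c) : C) = QuotientGroup.mk σ :=
      QuotientGroup.out_eq' c
    have hmem : (Quotient.out c)⁻¹ * σ ∈ P := QuotientGroup.eq.mp hout
    rw [Subgroup.mem_sup] at hmem
    obtain ⟨y, hy, z, hz, hyz⟩ := hmem
    obtain ⟨k, hk, hzk⟩ := hmemg z hz
    have hσ : σ = Quotient.out c * (y * z) := by
      rw [hyz]
      rw [← mul_assoc, mul_inv_cancel, one_mul]
    rcases hmem2 y hy with h | h
    · have hσ' : σ = g ^ ((k : ZMod q)).val * Quotient.out c := by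
        rw [hσ, h, one_mul, hzk, mul_comm, ZMod.val_cast_of_lt hk]
      have heqF : π (ρ σ e') = F ((k : ZMod q), c) := by rw [hFdef, ← hσ']
      show π (ρ σ e') ∈ (Submodule.span (ZMod q) (Set.range F) : Set V)
      rw [heqF]
      exact Submodule.subset_span ⟨((k : ZMod q), c), rfl⟩
    · have hσ' : σ = u * (g ^ ((k : ZMod q)).val * Quotient.out c) := by
        rw [hσ, h, hzk, ZMod.val_cast_of_lt hk]
        rw [mul_comm (Quotient.out c), mul_assoc]
      have heqF : π (ρ σ e') = - F ((k : ZMod q), c) := by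
        rw [hFdef, hσ', map_mul]
        show π ((ρ u) ((ρ (g ^ ((k:ZMod q)).val * Quotient.out c)) e')) = _
        rw [hρu, map_neg]
      show π (ρ σ e') ∈ (Submodule.span (ZMod q) (Set.range F) : Set V)
      rw [heqF]
      exact Submodule.neg_mem _ (Submodule.subset_span ⟨((k : ZMod q), c), rfl⟩)
  have hcardF : Fintype.card (ZMod q × C) = n := by
    rw [Fintype.card_prod, ZMod.card, ← Nat.card_eq_fintype_card]
    exact hcardC
  have hFli : LinearIndependent (ZMod q) F :=
    linearIndependent_of_top_le_span_of_card_eq_finrank hFspan (hcardF.trans hdim.symm)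
  let Fb : Module.Basis (ZMod q × C) (ZMod q) V := Module.Basis.mk hFli hFspan
  have hFb : ∀ jc, Fb jc = F jc := fun jc => Module.Basis.mk_apply hFli hFspan jc
  -- the induced action of g on V
  have hcompat : Q ≤ Q.comap (ρ g).toLinearMap := by
    intro x hx
    obtain ⟨y, hy⟩ := (hQmem x).mp hx
    rw [Submodule.mem_comap]
    rw [hQmem]
    refine ⟨ρ g y, ?_⟩
    show (q:ℤ) • (ρ g) y = (ρ g).toLinearMap x
    rw [← hy]
    simp
  let Tbar : V →ₗ[ℤ] V := Submodule.mapQ Q Q (ρ g).toLinearMap hcompat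
  have hTbar : ∀ x : L, Tbar (π x) = π (ρ g x) := by
    intro x
    rfl
  let Tq : V →ₗ[ZMod q] V := AddMonoidHom.toZModLinearMap q Tbar.toAddMonoidHom
  have hTq : ∀ x : L, Tq (π x) = π (ρ g x) := hTbar
  have hval1 : (1 : ZMod q).val = 1 := ZMod.val_one q
  have hshift : ∀ (j : ZMod q) (c : C), Tq (F ⟨j, c⟩) = F ⟨j + 1, c⟩ := by
    intro j c
    rw [hFdef, hFdef]
    rw [hTq]
    have h1 : ρ (g * (g ^ j.val * Quotient.out c)) e' = ρ g ((ρ (g ^ j.val * Quotient.out c)) e') := by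
      rw [map_mul]
      rfl
    rw [← h1]
    have h2 : g * (g ^ j.val * Quotient.out c) = g ^ (j.val + 1) * Quotient.out c := by
      rw [← mul_assoc, pow_succ, mul_comm (g ^ j.val) g]
    have h3 : g ^ (j.val + 1) = g ^ (j + 1).val := by
      rw [pow_eq_pow_iff_modEq, hgord]
      have : (j + 1).val = (j.val + 1) % q := by
        rw [ZMod.val_add, hval1]
      rw [this]
      exact (Nat.mod_modEq _ _).symm
    rw [h2, h3]
  -- the fixed vector π e
  have hfix : Tq (π e) = π e := by rw [hTq, hge]
  set r : (ZMod q × C) → ZMod q := fun jc => Fb.repr (π e) jc with hr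
  have hrepr : π e = ∑ jc, r jc • Fb jc := (Module.Basis.sum_repr Fb (π e)).symm
  have hstep : π e = ∑ jc : ZMod q × C, r (jc.1 - 1, jc.2) • Fb jc := by
    conv_lhs => rw [← hfix, hrepr]
    rw [map_sum]
    have h4 : ∀ jc : ZMod q × C, Tq (r jc • Fb jc) = r jc • Fb (jc.1 + 1, jc.2) := by
      intro jc
      rw [map_smul, hFb, hFb]
      congr 1
      exact hshift jc.1 jc.2
    rw [Finset.sum_congr rfl (fun jc _ => h4 jc)]
    apply Fintype.sum_equiv ((Equiv.addRight (1 : ZMod q)).prodCongr (Equiv.refl C))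
    intro jc
    simp only [Equiv.prodCongr_apply, Equiv.coe_addRight, Equiv.refl_apply, Prod.map]
    rw [add_sub_cancel_right]
  have hcoef : ∀ jc : ZMod q × C, r jc = r (jc.1 - 1, jc.2) := by
    have h6 : Fb.repr (π e) = Fb.repr (∑ jc : ZMod q × C, r (jc.1 - 1, jc.2) • Fb jc) :=
      congrArg _ hstep
    have h7 : (Fb.repr (π e) : (ZMod q × C) → ZMod q)
        = fun jc : ZMod q × C => r (jc.1 - 1, jc.2) := by
      rw [h6]
      exact Fb.repr_sum_self _
    intro jc
    exact congrFun h7 jc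
  have hconstN : ∀ (k : ℕ) (c : C), r ((k : ZMod q), c) = r (0, c) := by
    intro k
    induction k with
    | zero => intro c; norm_num
    | succ m ih =>
      intro c
      have h1 : ((m + 1 : ℕ) : ZMod q) = ((m : ℕ) : ZMod q) + 1 := by push_cast; ring
      rw [h1]
      have h2 := hcoef (((m : ℕ) : ZMod q) + 1, c)
      simp only [add_sub_cancel_right] at h2
      rw [h2]
      exact ih c
  have hconst : ∀ (j : ZMod q) (c : C), r (j, c) = r (0, c) := by
    intro j c
    have h3 : ((j.val : ℕ) : ZMod q) = j := ZMod.natCast_rightInverse j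
    rw [← h3]
    exact hconstN j.val c
  set w : V := ∑ jc : ZMod q × C, (r (0, jc.2) * (- jc.1)) • Fb jc with hw
  have hTw : Tq w - w = π e := by
    rw [hw, map_sum]
    have h4 : ∀ jc : ZMod q × C, Tq ((r (0, jc.2) * (- jc.1)) • Fb jc)
        = (r (0, jc.2) * (- jc.1)) • Fb (jc.1 + 1, jc.2) := by
      intro jc
      rw [map_smul, hFb, hFb]
      congr 1
      exact hshift jc.1 jc.2
    rw [Finset.sum_congr rfl (fun jc _ => h4 jc)]
    have h5 : ∑ jc : ZMod q × C, (r (0, jc.2) * (- jc.1)) • Fb (jc.1 + 1, jc.2)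
        = ∑ jc : ZMod q × C, (r (0, jc.2) * (-(jc.1 - 1))) • Fb jc := by
      apply Fintype.sum_equiv ((Equiv.addRight (1 : ZMod q)).prodCongr (Equiv.refl C))
      intro jc
      simp only [Equiv.prodCongr_apply, Equiv.coe_addRight, Equiv.refl_apply, Prod.map]
      rw [add_sub_cancel_right]
    rw [h5, ← Finset.sum_sub_distrib, hrepr]
    apply Finset.sum_congr rfl
    intro jc _
    rw [← sub_smul]
    have h7 : r jc = r (jc.1, jc.2) := by rw [← Prod.mk.eta (p := jc)]
    rw [h7, hconst jc.1 jc.2]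
    congr 1
    ring
  obtain ⟨x, hx⟩ := hπsurj w
  have hzero : π (ρ g x - x - e) = 0 := by
    rw [map_sub, map_sub, ← hTq x, hx, hTw, sub_self]
  have hQmem2 : ρ g x - x - e ∈ Q := by
    rwa [hπ, Submodule.mkQ_apply, Submodule.Quotient.mk_eq_zero] at hzero
  obtain ⟨y, hy⟩ := (hQmem _).mp hQmem2
  have heq2 : e = ρ g x - x - (q:ℤ) • y := by rw [hy]; abel
  have hBg : B (ρ g x) e = B x e := by
    conv_lhs => rw [← hge]
    exact hρB g x e
  have hBe : (1:ℤ) = -((q:ℤ) * B y e) := by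
    have h8 : (B e) e = (B (ρ g x - x - (q:ℤ) • y)) e := congrArg (fun z => (B z) e) heq2
    rw [← he, h8]
    simp only [map_sub, map_smul, LinearMap.sub_apply, LinearMap.smul_apply, smul_eq_mul]
    rw [hBg]
    ring
  have hdvd1 : (q:ℤ) ∣ 1 := ⟨-(B y e), by linarith⟩
  have hle := Int.le_of_dvd one_pos hdvd1
  have hq2' : (2:ℤ) ≤ (q:ℤ) := by exact_mod_cast hq2
  linarith



lemma aux_stab {G : Type*} [CommGroup G] [Fintype G] (u : G) (hu1 : u ≠ 1) (hu2 : u * u = 1)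
    {L : Type*} [AddCommGroup L]
    (B : L →ₗ[ℤ] L →ₗ[ℤ] ℤ)
    (ρ : G →* (L ≃ₗ[ℤ] L))
    (hρB : ∀ (σ : G) (x y : L), B (ρ σ x) (ρ σ y) = B x y)
    (hρu : ∀ x : L, ρ u x = -x)
    (n : ℕ) (hn0 : 0 < n) (hG : Nat.card G = 2 * n)
    (hfin : Module.Finite ℤ L) (hfree : Module.Free ℤ L)
    (hrank : Module.finrank ℤ L = n)
    (hinvm : ∀ m : ℕ, 0 < m → ∃ e : L,
      Submodule.span ℤ
        ((Set.range fun σ : G => ρ σ e) ∪ (Set.range fun y : L => (m : ℤ) • y)) = ⊤)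
    (e : L) (he : B e e = 1)
    (σ : G) (hσe : ρ σ e = e) : σ = 1 := by
  by_contra hσ1
  set d := orderOf σ with hd
  have hd1 : d ≠ 1 := fun h => hσ1 (orderOf_eq_one_iff.mp h)
  have hd0 : 0 < d := orderOf_pos σ
  set q := d.minFac with hqdef
  have hq : q.Prime := Nat.minFac_prime hd1
  set g := σ ^ (d / q) with hgdef
  have hdvd : d / q ∣ d := Nat.div_dvd_of_dvd (Nat.minFac_dvd d)
  have hgord : orderOf g = q := by
    rw [hgdef, orderOf_pow, ← hd, Nat.gcd_eq_right hdvd, Nat.div_div_self (Nat.minFac_dvd d) (by omega)]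
  have hpow : ∀ m : ℕ, ρ (σ ^ m) e = e := by
    intro m
    induction m with
    | zero => rw [pow_zero, map_one]; rfl
    | succ k ih =>
      rw [pow_succ, map_mul]
      show ρ (σ ^ k) (ρ σ e) = e
      rw [hσe, ih]
  have hge : ρ g e = e := hpow _
  have hgu : g ≠ u := by
    intro h
    have h1 : ρ u e = e := by rw [← h]; exact hge
    rw [hρu] at h1
    have h2 : e + e = 0 := by
      nth_rewrite 1 [← h1]; abel
    have h3 : B (e + e) e = 0 := by rw [h2]; simp
    rw [map_add, LinearMap.add_apply, he] at h3
    omega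
  obtain ⟨e', hsp⟩ := hinvm q hq.pos
  exact aux_lemA u hu1 hu2 B ρ hρB hρu n hn0 hG hfin hfree hrank q hq g hgord hgu e' hsp e he hge

theorem stmt_15' {G : Type*} [CommGroup G] [Fintype G]
    (u : G) (hu1 : u ≠ 1) (hu2 : u * u = 1)
    {L : Type*} [AddCommGroup L]
    (B : L →ₗ[ℤ] L →ₗ[ℤ] ℤ)
    (hsymm : ∀ x y : L, B x y = B y x)
    (hpos : ∀ x : L, x ≠ 0 → 0 < B x x)
    (ρ : G →* (L ≃ₗ[ℤ] L))
    (hρB : ∀ (σ : G) (x y : L), B (ρ σ x) (ρ σ y) = B x y)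
    (hρu : ∀ x : L, ρ u x = -x)
    (hrank0 : Module.finrank ℤ L = Fintype.card G / 2)
    (hBbij : Function.Bijective fun x : L => B x)
    (hinvm : ∀ m : ℕ, 0 < m → ∃ e : L,
      Submodule.span ℤ
        ((Set.range fun σ : G => ρ σ e) ∪ (Set.range fun y : L => (m : ℤ) • y)) = ⊤)
    (e : L) (he : B e e = 1) :
    (Submodule.span ℤ (Set.range fun σ : G => ρ σ e) = ⊤) ∧
    Function.Injective (fun σ : G => ρ σ e) ∧
    (Set.range fun σ : G => ρ σ e) = {x : L | B x x = 1} := by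
  have hordu : orderOf u = 2 := orderOf_eq_prime (by rw [pow_two]; exact hu2) hu1
  have hdvd2 : 2 ∣ Fintype.card G := hordu ▸ orderOf_dvd_card
  set n := Fintype.card G / 2 with hn
  have hcardG : Fintype.card G = 2 * n := by omega
  have hn0 : 0 < n := by
    have : 0 < Fintype.card G := Fintype.card_pos
    omega
  have hG : Nat.card G = 2 * n := by rw [Nat.card_eq_fintype_card]; exact hcardG
  have hrank : Module.finrank ℤ L = n := hrank0
  have hBinj : ∀ x : L, B x = 0 → x = 0 := by
    intro x hx
    exact hBbij.injective (a₁ := x) (a₂ := 0) (by rw [hx]; simp)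
  obtain ⟨hfin, hfree⟩ := aux_basis_s15 B hBinj n hn0 hrank
  have hstab : ∀ σ : G, ρ σ e = e → σ = 1 := fun σ h =>
    aux_stab u hu1 hu2 B ρ hρB hρu n hn0 hG hfin hfree hrank hinvm e he σ h
  have hinj : Function.Injective (fun σ : G => ρ σ e) := by
    intro σ τ h
    simp only at h
    have h1 : ρ (τ⁻¹ * σ) e = e := by
      have h2 : ρ (τ⁻¹ * σ) e = ρ τ⁻¹ (ρ σ e) := by rw [map_mul]; rfl
      rw [h2, h]
      have h3 : ρ (τ⁻¹ * τ) e = ρ τ⁻¹ (ρ τ e) := by rw [map_mul]; rfl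
      rw [← h3, inv_mul_cancel, map_one]
      rfl
    have h4 := hstab _ h1
    rwa [inv_mul_eq_one, eq_comm] at h4
  -- the orthonormal family
  set U := Subgroup.zpowers u with hU
  set Γ := G ⧸ U with hΓ
  haveI : Fintype Γ := Fintype.ofFinite Γ
  have hcardΓ : Fintype.card Γ = n := by
    have h1 := Subgroup.card_eq_card_quotient_mul_card_subgroup U
    rw [hG, Nat.card_zpowers, hordu] at h1
    rw [← hΓ] at h1
    rw [← Nat.card_eq_fintype_card]
    omega
  set f : Γ → L := fun c => ρ (Quotient.out c) e with hf
  have hnorm : ∀ c, B (f c) (f c) = 1 := by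
    intro c
    show B (ρ _ e) (ρ _ e) = 1
    rw [hρB]; exact he
  have hneg : ∀ (s : G), ρ (u * s) e = - ρ s e := by
    intro s
    have h1 : ρ (u * s) e = ρ u (ρ s e) := by rw [map_mul]; rfl
    rw [h1, hρu]
  have horth : ∀ c c', c ≠ c' → B (f c) (f c') = 0 := by
    intro c c' hcc
    apply aux_orth B hsymm hpos _ _ (hnorm c) (hnorm c')
    · intro h
      have h2 : Quotient.out c = Quotient.out c' := hinj h
      exact hcc (by rw [← QuotientGroup.out_eq' c, ← QuotientGroup.out_eq' c', h2])
    · intro h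
      have h2 : ρ (Quotient.out c) e = ρ (u * Quotient.out c') e := by
        rw [hneg]
        exact h
      have h3 : Quotient.out c = u * Quotient.out c' := hinj h2
      apply hcc
      rw [← QuotientGroup.out_eq' c, ← QuotientGroup.out_eq' c', h3]
      rw [QuotientGroup.eq]
      have h4 : (u * Quotient.out c')⁻¹ * Quotient.out c' = u⁻¹ := by
        rw [mul_inv_rev, mul_comm (Quotient.out c')⁻¹ u⁻¹, mul_assoc, inv_mul_cancel, mul_one]
      rw [h4]
      exact Subgroup.inv_mem _ (Subgroup.mem_zpowers u)
  -- decomposition of any vector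
  have hdecomp : ∀ x : L, x = ∑ c : Γ, (B x (f c)) • f c := by
    intro x
    set y := x - ∑ c : Γ, (B x (f c)) • f c with hy
    have hyf : ∀ c0 : Γ, B y (f c0) = 0 := by
      intro c0
      rw [hy, map_sub, LinearMap.sub_apply]
      have h1 : B (∑ c : Γ, (B x (f c)) • f c) (f c0) = B x (f c0) := by
        rw [map_sum, LinearMap.sum_apply]
        rw [Finset.sum_eq_single c0]
        · rw [map_smul, LinearMap.smul_apply, hnorm c0, smul_eq_mul, mul_one]
        · intro c _ hc
          rw [map_smul, LinearMap.smul_apply, horth c c0 hc, smul_eq_mul, mul_zero]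
        · intro hh
          exact absurd (Finset.mem_univ c0) hh
      rw [h1, sub_self]
    have hy0 : y = 0 := by
      by_contra hyne
      have hli : LinearIndependent ℤ (fun o : Option Γ => o.elim y f) := by
        rw [Fintype.linearIndependent_iff]
        intro k hk
        have hksome : ∀ c0 : Γ, k (some c0) = 0 := by
          intro c0
          have h2 : B (∑ o : Option Γ, k o • (Option.elim o y f)) (f c0) = k (some c0) := by
            rw [map_sum, LinearMap.sum_apply, Fintype.sum_option]
            simp only [Option.elim_none, Option.elim_some]
            have h3 : (B (k none • y)) (f c0) = 0 := by
              rw [map_smul, LinearMap.smul_apply, hyf c0, smul_eq_mul, mul_zero]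
            rw [h3, zero_add]
            rw [Finset.sum_eq_single c0]
            · rw [map_smul, LinearMap.smul_apply, hnorm c0, smul_eq_mul, mul_one]
            · intro c _ hc
              rw [map_smul, LinearMap.smul_apply, horth c c0 hc, smul_eq_mul, mul_zero]
            · intro hh
              exact absurd (Finset.mem_univ c0) hh
          rw [hk] at h2
          rw [← h2]
          simp
        have hknone : k none = 0 := by
          have h2 : B (∑ o : Option Γ, k o • (Option.elim o y f)) y = k none * B y y := by
            rw [map_sum, LinearMap.sum_apply, Fintype.sum_option]
            simp only [Option.elim_none, Option.elim_some]
            have h3 : ∑ c : Γ, (B (k (some c) • f c)) y = 0 := by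
              apply Finset.sum_eq_zero
              intro c _
              rw [hksome c]
              simp
            rw [h3, add_zero, map_smul, LinearMap.smul_apply, smul_eq_mul]
          rw [hk] at h2
          rw [map_zero, LinearMap.zero_apply] at h2
          have hBy := hpos y hyne
          rcases mul_eq_zero.mp h2.symm with h | h
          · exact h
          · omega
        intro o
        cases o with
        | none => exact hknone
        | some c => exact hksome c
      have hcard := hli.fintype_card_le_finrank
      rw [Fintype.card_option, hcardΓ, hrank] at hcard
      omega
    have h9 : x - ∑ c : Γ, (B x (f c)) • f c = 0 := by rw [← hy]; exact hy0
    exact (sub_eq_zero.mp h9)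
  have hspan : Submodule.span ℤ (Set.range fun σ : G => ρ σ e) = ⊤ := by
    rw [eq_top_iff]
    intro x _
    rw [hdecomp x]
    apply Submodule.sum_mem
    intro c _
    apply Submodule.smul_mem
    exact Submodule.subset_span ⟨Quotient.out c, rfl⟩
  refine ⟨hspan, hinj, ?_⟩
  apply Set.Subset.antisymm
  · rintro _ ⟨σ, rfl⟩
    show B (ρ σ e) (ρ σ e) = 1
    rw [hρB]; exact he
  · intro x hx
    have hx1 : B x x = 1 := hx
    set k : Γ → ℤ := fun c => B x (f c) with hkdef
    have hxk : x = ∑ c : Γ, k c • f c := hdecomp x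
    have hsum : ∑ c : Γ, (k c)^2 = 1 := by
      have h1 : B x x = B (∑ c : Γ, k c • f c) x := congrArg (fun z => (B z) x) hxk
      rw [map_sum, LinearMap.sum_apply] at h1
      have h2 : ∀ c : Γ, (B (k c • f c)) x = (k c)^2 := by
        intro c
        rw [map_smul, LinearMap.smul_apply, smul_eq_mul, hsymm (f c) x]
        rw [hkdef]
        ring
      rw [Finset.sum_congr rfl (fun c _ => h2 c)] at h1
      rw [← h1, hx1]
    have hex : ∃ c0 : Γ, k c0 ≠ 0 := by
      by_contra hall
      push_neg at hall
      rw [Finset.sum_eq_zero (fun c _ => by rw [hall c]; ring)] at hsum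
      omega
    obtain ⟨c0, hc0⟩ := hex
    have h2 : (k c0)^2 + ∑ c ∈ Finset.univ.erase c0, (k c)^2 = 1 := by
      rw [Finset.add_sum_erase Finset.univ (fun c => (k c)^2) (Finset.mem_univ c0)]
      exact hsum
    have h3 : 1 ≤ (k c0)^2 := by
      have := Int.one_le_abs hc0
      nlinarith [sq_abs (k c0)]
    have h4 : (0:ℤ) ≤ ∑ c ∈ Finset.univ.erase c0, (k c)^2 :=
      Finset.sum_nonneg fun c _ => sq_nonneg _
    have h5 : (k c0)^2 = 1 := by linarith
    have h6 : ∑ c ∈ Finset.univ.erase c0, (k c)^2 = 0 := by linarith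
    have h7 := (Finset.sum_eq_zero_iff_of_nonneg (fun c _ => sq_nonneg (k c))).mp h6
    have hkc : ∀ c, c ≠ c0 → k c = 0 := by
      intro c hc
      have := h7 c (Finset.mem_erase.mpr ⟨hc, Finset.mem_univ c⟩)
      exact pow_eq_zero_iff (n := 2) (by norm_num) |>.mp this
    have hk1 : k c0 = 1 ∨ k c0 = -1 := by
      rw [sq] at h5
      exact mul_self_eq_one_iff.mp h5
    have hxval : x = k c0 • f c0 := by
      have h8 : ∑ c : Γ, k c • f c = k c0 • f c0 := by
        rw [Finset.sum_eq_single c0]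
        · intro c _ hc; rw [hkc c hc, zero_smul]
        · intro hh; exact absurd (Finset.mem_univ c0) hh
      rw [← h8]; exact hxk
    rcases hk1 with h | h
    · rw [h, one_smul] at hxval
      exact ⟨Quotient.out c0, hxval.symm⟩
    · rw [h] at hxval
      refine ⟨u * Quotient.out c0, ?_⟩
      show ρ (u * Quotient.out c0) e = x
      rw [hneg, hxval, neg_one_smul]

/-- If `e` is a short vector of an invertible `G`-lattice `L`, then the
`G`-orbit of `e` generates `L` as an abelian group, and `σ ↦ σe` is a bijection
from `G` onto the set of short vectors of `L`. -/
theorem stmt_15 (G : Type*) [CommGroup G] [Fintype G]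
    (u : G) (hu1 : u ≠ 1) (hu2 : u * u = 1)
    (L : Type*) [AddCommGroup L]
    (B : L →ₗ[ℤ] L →ₗ[ℤ] ℤ)
    (hsymm : ∀ x y : L, B x y = B y x)
    (hpos : ∀ x : L, x ≠ 0 → 0 < B x x)
    (ρ : G →* (L ≃ₗ[ℤ] L))
    (hρB : ∀ (σ : G) (x y : L), B (ρ σ x) (ρ σ y) = B x y)
    (hρu : ∀ x : L, ρ u x = -x)
    (hinv : GInvertible G u L B ρ)
    (e : L) (he : B e e = 1) :
    (Submodule.span ℤ (Set.range fun σ : G => ρ σ e) = ⊤) ∧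
    Function.Injective (fun σ : G => ρ σ e) ∧
    (Set.range fun σ : G => ρ σ e) = {x : L | B x x = 1} := by
  obtain ⟨h1, h2, h3⟩ := hinv
  exact stmt_15' u hu1 hu2 B hsymm hpos ρ hρB hρu h1 h2 h3 e he
end
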